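/- arXiv:1302.3867 — 3 statements merged into one kernel-verified Lean document; each statement's English description precedes it below -/
import Mathlib

section
/- Let r ≥ 1 and let G be a graph with a tree-cut decomposition of adhesion less than r such that every torso has at most r vertices of degree at least r. Then G does not admit a weak immersion of K_{r+1}. -/
open Sym2

/-- A finite multigraph: finite vertex and edge types, each edge has an
unordered pair of endpoints, and there are no loops. -/
structure Multigraph where
  V : Type
  E : Type
  finV : Finite V
  finE : Finite E
  ends : E → Sym2 V
  no_loops : ∀ e, ¬ (ends e).IsDiag

attribute [instance] Multigraph.finV Multigraph.finE

namespace Multigraph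

/-- `IsWalk G vs es`: `vs` is the vertex sequence and `es` the edge sequence of a
walk in `G`. -/
inductive IsWalk (G : Multigraph) : List G.V → List G.E → Prop
  | nil (v : G.V) : IsWalk G [v] []
  | cons {v : G.V} {vs : List G.V} {es : List G.E} (u : G.V) (e : G.E)
      (he : G.ends e = s(u, v)) (hw : IsWalk G (v :: vs) es) :
      IsWalk G (u :: v :: vs) (e :: es)

/-- A path from `a` to `b` in the multigraph `G`, given by its vertex sequence `vs`
and edge sequence `es`. -/
def IsPathBetween (G : Multigraph) (a b : G.V) (vs : List G.V) (es : List G.E) : Prop :=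
  G.IsWalk vs es ∧ vs.Nodup ∧ vs.head? = some a ∧ vs.getLast? = some b

/-- A weak immersion of `H` into `G`. -/
structure WeakImmersion (H G : Multigraph) where
  vmap : H.V → G.V
  vmap_inj : Function.Injective vmap
  pverts : H.E → List G.V
  pedges : H.E → List G.E
  is_path : ∀ f : H.E, ∃ x y : H.V, H.ends f = s(x, y) ∧
    G.IsPathBetween (vmap x) (vmap y) (pverts f) (pedges f)
  edge_disjoint : ∀ f f' : H.E, f ≠ f' → ∀ e, e ∈ pedges f → e ∉ pedges f'

/-- `G.Immerses H`: `G` admits a weak immersion of `H`. -/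
def Immerses (G H : Multigraph) : Prop := Nonempty (WeakImmersion H G)

/-- The degree of a vertex: the number of edges incident with it. -/
noncomputable def degree (G : Multigraph) (v : G.V) : ℕ :=
  Nat.card {e : G.E // v ∈ G.ends e}

/-- The edge cut `δ(U)`: edges with exactly one endpoint in `U`. -/
def edgeCut (G : Multigraph) (U : Set G.V) : Set G.E :=
  {e | ∃ a b, G.ends e = s(a, b) ∧ a ∈ U ∧ b ∉ U}

/-- There exist `k` pairwise edge-disjoint paths from `a` to `b` in `G`. -/
def EdgeDisjointPaths (G : Multigraph) (a b : G.V) (k : ℕ) : Prop :=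
  ∃ (vs : Fin k → List G.V) (es : Fin k → List G.E),
    (∀ i, G.IsPathBetween a b (vs i) (es i)) ∧
    ∀ i j, i ≠ j → ∀ e, e ∈ es i → e ∉ es j

/-- Isomorphism of multigraphs. -/
structure Iso (G H : Multigraph) where
  vmap : G.V ≃ H.V
  emap : G.E ≃ H.E
  ends_map : ∀ e, H.ends (emap e) = Sym2.map vmap (G.ends e)

/-- The complete graph `K_t` as a multigraph. -/
def completeGraph (t : ℕ) : Multigraph where
  V := Fin t
  E := {p : Sym2 (Fin t) // ¬ p.IsDiag}
  finV := inferInstance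
  finE := inferInstance
  ends := Subtype.val
  no_loops := fun e => e.prop

/-- The multigraph `S_{k,n}`: vertices `x_1, …, x_n, y` (with `y = none`) and `k`
parallel edges from each `x_i` to `y`. -/
def star (k n : ℕ) : Multigraph where
  V := Option (Fin n)
  E := Fin n × Fin k
  finV := inferInstance
  finE := inferInstance
  ends := fun p => s(some p.1, none)
  no_loops := fun p => by simp [Sym2.mk_isDiag_iff]

/-! ### Edge sums -/

/-- A witness that `G` is a `k`-edge sum of `G₁` and `G₂`. -/
structure EdgeSumWitness (k : ℕ) (G G₁ G₂ : Multigraph) where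
  v₁ : G₁.V
  v₂ : G₂.V
  deg₁ : G₁.degree v₁ = k
  deg₂ : G₂.degree v₂ = k
  π : {e : G₁.E // v₁ ∈ G₁.ends e} ≃ {e : G₂.E // v₂ ∈ G₂.ends e}
  α : G.V ≃ {x : G₁.V // x ≠ v₁} ⊕ {y : G₂.V // y ≠ v₂}
  β : G.E ≃ ({e : G₁.E // v₁ ∉ G₁.ends e} ⊕ {e : G₂.E // v₂ ∉ G₂.ends e}) ⊕
      {e : G₁.E // v₁ ∈ G₁.ends e}
  ends₁ : ∀ (e : {e : G₁.E // v₁ ∉ G₁.ends e}) (x y : G₁.V) (hx : x ≠ v₁) (hy : y ≠ v₁),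
    G₁.ends e.val = s(x, y) →
      G.ends (β.symm (Sum.inl (Sum.inl e))) = s(α.symm (Sum.inl ⟨x, hx⟩), α.symm (Sum.inl ⟨y, hy⟩))
  ends₂ : ∀ (e : {e : G₂.E // v₂ ∉ G₂.ends e}) (x y : G₂.V) (hx : x ≠ v₂) (hy : y ≠ v₂),
    G₂.ends e.val = s(x, y) →
      G.ends (β.symm (Sum.inl (Sum.inr e))) = s(α.symm (Sum.inr ⟨x, hx⟩), α.symm (Sum.inr ⟨y, hy⟩))
  ends₃ : ∀ (e : {e : G₁.E // v₁ ∈ G₁.ends e}) (x : G₁.V) (y : G₂.V) (hx : x ≠ v₁) (hy : y ≠ v₂),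
    G₁.ends e.val = s(x, v₁) → G₂.ends (π e).val = s(y, v₂) →
      G.ends (β.symm (Sum.inr e)) = s(α.symm (Sum.inl ⟨x, hx⟩), α.symm (Sum.inr ⟨y, hy⟩))

/-- `G` is a `k`-edge sum of `G₁` and `G₂`. -/
def IsEdgeSum (k : ℕ) (G G₁ G₂ : Multigraph) : Prop :=
  Nonempty (EdgeSumWitness k G G₁ G₂)

/-- The edge sum is grounded. -/
def EdgeSumWitness.Grounded {k : ℕ} {G G₁ G₂ : Multigraph}
    (w : EdgeSumWitness k G G₁ G₂) : Prop :=
  (∃ v', v' ≠ w.v₁ ∧ G₁.EdgeDisjointPaths w.v₁ v' k) ∧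
  (∃ v', v' ≠ w.v₂ ∧ G₂.EdgeDisjointPaths w.v₂ v' k)

/-- `G` is a grounded `k`-edge sum of `G₁` and `G₂`. -/
def IsGroundedEdgeSum (k : ℕ) (G G₁ G₂ : Multigraph) : Prop :=
  ∃ w : EdgeSumWitness k G G₁ G₂, w.Grounded

/-! ### Auxiliary simple-graph operations -/

/-- Delete the vertex `t` from `T` (keeping it as an isolated vertex). -/
def delAt {τ : Type} (T : SimpleGraph τ) (t : τ) : SimpleGraph τ where
  Adj a b := T.Adj a b ∧ a ≠ t ∧ b ≠ t
  symm := ⟨fun a b h => ⟨h.1.symm, h.2.2, h.2.1⟩⟩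
  loopless := ⟨fun a h => T.loopless.irrefl a h.1⟩

lemma reach_delAt {τ : Type} (T : SimpleGraph τ) (t : τ) {a b : τ} (q : T.Walk a b)
    (ht : t ∉ q.support) : (delAt T t).Reachable a b := by
  induction q with
  | nil => exact SimpleGraph.Reachable.refl _
  | @cons u v w h p ih =>
      simp only [SimpleGraph.Walk.support_cons, List.mem_cons] at ht
      push_neg at ht
      have hv : v ≠ t := fun hv => ht.2 (hv ▸ p.start_mem_support)
      exact (SimpleGraph.Adj.reachable (G := delAt T t) ⟨h, Ne.symm ht.1, hv⟩).trans (ih ht.2)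

/-! ### Tree-cut decompositions -/

/-- A tree-cut decomposition of the multigraph `G`. -/
structure TreeCutDecomp (G : Multigraph) where
  T : Type
  finT : Finite T
  tree : SimpleGraph T
  isTree : tree.IsTree
  bag : T → Set G.V
  disj : ∀ s t : T, s ≠ t → Disjoint (bag s) (bag t)
  covers : ∀ v : G.V, ∃ t : T, v ∈ bag t

attribute [instance] TreeCutDecomp.finT

variable {G : Multigraph}

/-- The union of the bags on the `v`-side of the tree edge `uv`. -/
def TreeCutDecomp.sideSet (D : TreeCutDecomp G) (u v : D.T) : Set G.V :=
  {x | ∃ s, (D.tree.deleteEdges {s(u, v)}).Reachable v s ∧ x ∈ D.bag s}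

/-- The adhesion of a tree-cut decomposition. -/
noncomputable def TreeCutDecomp.adhesion (D : TreeCutDecomp G) : ℕ :=
  sSup {n | ∃ u v : D.T, D.tree.Adj u v ∧ n = (G.edgeCut (D.sideSet u v)).ncard}

lemma TreeCutDecomp.exists_periph (D : TreeCutDecomp G) (t : D.T) (v : G.V)
    (hv : v ∉ D.bag t) :
    ∃ u : D.T, D.tree.Adj t u ∧ ∃ s, v ∈ D.bag s ∧ (delAt D.tree t).Reachable s u := by
  classical
  obtain ⟨s, hs⟩ := D.covers v
  have hst : t ≠ s := fun h => hv (h ▸ hs)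
  obtain ⟨w⟩ := D.isTree.isConnected.preconnected t s
  obtain ⟨x, hadj, q, hq⟩ := SimpleGraph.Walk.exists_eq_cons_of_ne hst w.toPath.val
  have hP : (SimpleGraph.Walk.cons hadj q).IsPath := hq ▸ w.toPath.prop
  rw [SimpleGraph.Walk.cons_isPath_iff] at hP
  exact ⟨x, hadj, s, hs, (reach_delAt D.tree t q hP.2).symm⟩

open Classical in
/-- The map from `G` to the vertices of the torso at `t`. -/
noncomputable def TreeCutDecomp.proj (D : TreeCutDecomp G) (t : D.T) (v : G.V) :
    ↥(D.bag t) ⊕ {u : D.T // D.tree.Adj t u} :=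
  if hv : v ∈ D.bag t then Sum.inl ⟨v, hv⟩
  else Sum.inr ⟨(D.exists_periph t v hv).choose, (D.exists_periph t v hv).choose_spec.1⟩

/-- The torso of `G` at a node `t` of a tree-cut decomposition. -/
noncomputable def TreeCutDecomp.torso (D : TreeCutDecomp G) (t : D.T) : Multigraph where
  V := ↥(D.bag t) ⊕ {u : D.T // D.tree.Adj t u}
  E := {e : G.E // ¬ (Sym2.map (D.proj t) (G.ends e)).IsDiag}
  finV := inferInstance
  finE := inferInstance
  ends := fun e => Sym2.map (D.proj t) (G.ends e.val)
  no_loops := fun e => e.prop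

/-- The core vertices of the torso at `t`. -/
def TreeCutDecomp.torsoCore (D : TreeCutDecomp G) (t : D.T) : Set (D.torso t).V :=
  Set.range Sum.inl

/-! ### The 3-center and tree-cut width -/

/-- Condition (1): the immersion of `H` in `G` covers `X` and every vertex of `H`
of degree at most two is mapped into `X`. -/
def CenterCond (G : Multigraph) (X : Set G.V) (H : Multigraph) (I : WeakImmersion H G) : Prop :=
  X ⊆ Set.range I.vmap ∧ ∀ x : H.V, H.degree x ≤ 2 → I.vmap x ∈ X

/-- `C` is a 3-center of `(G, X)`: it admits an immersion in `G` satisfying (1) and is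
maximal with respect to immersion containment among all such graphs. -/
def IsThreeCenter (G : Multigraph) (X : Set G.V) (C : Multigraph) : Prop :=
  (∃ I : WeakImmersion C G, CenterCond G X C I) ∧
  ∀ H : Multigraph, (∃ I : WeakImmersion H G, CenterCond G X H I) → C.Immerses H

/-- The number of vertices of the 3-center of `(G, X)`. -/
noncomputable def threeCenterCard (G : Multigraph) (X : Set G.V) : ℕ :=
  sSup {n | ∃ C : Multigraph, IsThreeCenter G X C ∧ Nat.card C.V = n}

/-- The width of a tree-cut decomposition. -/
noncomputable def TreeCutDecomp.width (D : TreeCutDecomp G) : ℕ :=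
  max D.adhesion (sSup {n | ∃ t : D.T, n = threeCenterCard (D.torso t) (D.torsoCore t)})

/-- The tree-cut width of a multigraph. -/
noncomputable def tcw (G : Multigraph) : ℕ :=
  sInf {w | ∃ D : TreeCutDecomp G, D.width = w}

/-! ### Tree decompositions and tree-width -/

/-- A tree decomposition of the multigraph `G`. -/
structure TreeDecomp (G : Multigraph) where
  T : Type
  finT : Finite T
  tree : SimpleGraph T
  isTree : tree.IsTree
  bag : T → Set G.V
  covers_v : ∀ v : G.V, ∃ t : T, v ∈ bag t
  covers_e : ∀ e : G.E, ∃ (t : T) (x y : G.V), G.ends e = s(x, y) ∧ x ∈ bag t ∧ y ∈ bag t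
  connected : ∀ v : G.V, (SimpleGraph.induce {t : T | v ∈ bag t} tree).Connected

/-- The tree-width of a multigraph. -/
noncomputable def treewidth (G : Multigraph) : ℕ :=
  sInf {n | ∃ D : TreeDecomp G, ∀ t : D.T, (D.bag t).ncard ≤ n + 1}

/-! ### Walls and grids -/

def wallStep (r : ℕ) (a b : Fin r × Fin r) : Prop :=
  (a.1 = b.1 ∧ a.2.val + 1 = b.2.val) ∨
  (a.2 = b.2 ∧ a.1.val + 1 = b.1.val ∧ (a.1.val + 1) % 2 = (a.2.val + 1) % 2)

def wallAdj (r : ℕ) (a b : Fin r × Fin r) : Prop := wallStep r a b ∨ wallStep r b a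

lemma wallStep_ne {r : ℕ} {a b : Fin r × Fin r} (h : wallStep r a b) : a ≠ b := by
  rintro rfl
  rcases h with ⟨-, h⟩ | ⟨-, h, -⟩ <;> omega

/-- The `r`-wall `H_r`. -/
def wall (r : ℕ) : Multigraph where
  V := Fin r × Fin r
  E := {q : Sym2 (Fin r × Fin r) // ∃ a b, q = s(a, b) ∧ wallAdj r a b}
  finV := inferInstance
  finE := inferInstance
  ends := Subtype.val
  no_loops := by
    rintro ⟨q, a, b, rfl, hab⟩ hd
    rw [Sym2.mk_isDiag_iff] at hd
    subst hd
    rcases hab with h | h <;> exact wallStep_ne h rfl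

def gridStep (r : ℕ) (a b : Fin r × Fin r) : Prop :=
  (a.1 = b.1 ∧ a.2.val + 1 = b.2.val) ∨ (a.2 = b.2 ∧ a.1.val + 1 = b.1.val)

def gridAdj (r : ℕ) (a b : Fin r × Fin r) : Prop := gridStep r a b ∨ gridStep r b a

lemma gridStep_ne {r : ℕ} {a b : Fin r × Fin r} (h : gridStep r a b) : a ≠ b := by
  rintro rfl
  rcases h with ⟨-, h⟩ | ⟨-, h⟩ <;> omega

/-- The `r × r` grid. -/
def grid (r : ℕ) : Multigraph where
  V := Fin r × Fin r
  E := {q : Sym2 (Fin r × Fin r) // ∃ a b, q = s(a, b) ∧ gridAdj r a b}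
  finV := inferInstance
  finE := inferInstance
  ends := Subtype.val
  no_loops := by
    rintro ⟨q, a, b, rfl, hab⟩ hd
    rw [Sym2.mk_isDiag_iff] at hd
    subst hd
    rcases hab with h | h <;> exact gridStep_ne h rfl

/-! ### Subdivisions and minors -/

/-- `G` contains `H` as a subdivision: an immersion whose composite paths pairwise
meet only in common endpoints. -/
def ContainsSubdivision (G H : Multigraph) : Prop :=
  ∃ I : WeakImmersion H G, ∀ f f' : H.E, f ≠ f' → ∀ v : G.V,
    v ∈ I.pverts f → v ∈ I.pverts f' →
      ((I.pverts f).head? = some v ∨ (I.pverts f).getLast? = some v) ∧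
      ((I.pverts f').head? = some v ∨ (I.pverts f').getLast? = some v)

/-- A set of vertices is connected in `G`. -/
def ConnectedIn (G : Multigraph) (B : Set G.V) : Prop :=
  B.Nonempty ∧ ∀ a ∈ B, ∀ b ∈ B, ∃ (vs : List G.V) (es : List G.E),
    G.IsWalk vs es ∧ vs.head? = some a ∧ vs.getLast? = some b ∧ ∀ v ∈ vs, v ∈ B

/-- `G` contains `H` as a minor. -/
def HasMinor (G H : Multigraph) : Prop :=
  ∃ B : H.V → Set G.V,
    (∀ x, G.ConnectedIn (B x)) ∧
    (∀ x y, x ≠ y → Disjoint (B x) (B y)) ∧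
    ∃ η : H.E → G.E, Function.Injective η ∧
      ∀ (f : H.E) (x y : H.V), H.ends f = s(x, y) →
        ∃ a b, G.ends (η f) = s(a, b) ∧ a ∈ B x ∧ b ∈ B y

/-! ### Subgraphs, splitting off, suppression -/

/-- `A` is (isomorphic to) a subgraph of `G`. -/
def IsSubgraph (A G : Multigraph) : Prop :=
  ∃ (fv : A.V → G.V) (fe : A.E → G.E), Function.Injective fv ∧ Function.Injective fe ∧
    ∀ e, G.ends (fe e) = Sym2.map fv (A.ends e)

/-- `B` is obtained from `A` by splitting off a pair of incident edges. -/
def SplitOffRel (A B : Multigraph) : Prop :=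
  ∃ (e₁ e₂ : A.E) (x y z : A.V), e₁ ≠ e₂ ∧ x ≠ z ∧
    A.ends e₁ = s(x, y) ∧ A.ends e₂ = s(y, z) ∧
    ∃ (fV : A.V ≃ B.V) (fE : {e : A.E // e ≠ e₁ ∧ e ≠ e₂} ⊕ Unit ≃ B.E),
      (∀ e : {e : A.E // e ≠ e₁ ∧ e ≠ e₂},
        B.ends (fE (Sum.inl e)) = Sym2.map fV (A.ends e.val)) ∧
      B.ends (fE (Sum.inr ())) = s(fV x, fV z)

/-- `B` is obtained from `A` by suppressing a vertex of degree two (contracting one of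
its incident edges and deleting any resulting loops). -/
def SuppressTwoRel (A B : Multigraph) : Prop :=
  ∃ v : A.V, A.degree v = 2 ∧
    ∃ σ : A.V → B.V,
      (∀ x y, x ≠ v → y ≠ v → (σ x = σ y ↔ x = y)) ∧
      (∀ y : B.V, ∃ x, x ≠ v ∧ σ x = y) ∧
      (∃ a, a ≠ v ∧ (∃ e, A.ends e = s(v, a)) ∧ σ v = σ a) ∧
      ∃ τ : {e : A.E // ¬ (Sym2.map σ (A.ends e)).IsDiag} ≃ B.E,
        ∀ e, B.ends (τ e) = Sym2.map σ (A.ends e.val)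

/-- A multigraph together with a marked set of vertices. -/
structure MarkedGraph where
  G : Multigraph
  X : Set G.V

/-- One step of suppressing a vertex outside the marked set of degree at most two
(for degree zero this deletes the vertex). -/
def SuppressStep (A B : MarkedGraph) : Prop :=
  ∃ v : A.G.V, v ∉ A.X ∧ A.G.degree v ≤ 2 ∧
    ∃ σ : A.G.V → B.G.V,
      (∀ x y, x ≠ v → y ≠ v → (σ x = σ y ↔ x = y)) ∧
      (∀ y : B.G.V, ∃ x, x ≠ v ∧ σ x = y) ∧
      B.X = {y | ∃ x, x ∈ A.X ∧ σ x = y} ∧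
      (1 ≤ A.G.degree v → ∃ a, a ≠ v ∧ (∃ e, A.G.ends e = s(v, a)) ∧ σ v = σ a) ∧
      ∃ τ : {e : A.G.E // ¬ (Sym2.map σ (A.G.ends e)).IsDiag} ≃ B.G.E,
        ∀ e, B.G.ends (τ e) = Sym2.map σ (A.G.ends e.val)

/-! ### Trees and cycles as multigraphs -/

/-- A multigraph is a tree if it corresponds to a simple tree on its vertex set. -/
def IsTreeGraph (G : Multigraph) : Prop :=
  ∃ S : SimpleGraph G.V, S.IsTree ∧ ∃ φ : G.E ≃ S.edgeSet, ∀ e, (φ e : Sym2 G.V) = G.ends e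

/-- The cycle on `n + 3` vertices. -/
def cycleGraph (n : ℕ) : Multigraph where
  V := Fin (n + 3)
  E := Fin (n + 3)
  finV := inferInstance
  finE := inferInstance
  ends := fun i => s(i, i + 1)
  no_loops := by
    intro i hd
    rw [Sym2.mk_isDiag_iff] at hd
    have h1 : (i : Fin (n + 3)) + 0 = i + 1 := by simpa using hd
    have h01 : (0 : Fin (n + 3)) = 1 := add_left_cancel h1
    have := congrArg Fin.val h01
    simp [Fin.val_one] at this

/-- A matching in a multigraph: a set of pairwise vertex-disjoint edges. -/
def IsMatching (G : Multigraph) (M : Set G.E) : Prop :=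
  ∀ e ∈ M, ∀ e' ∈ M, e ≠ e' → ∀ v : G.V, v ∈ G.ends e → v ∉ G.ends e'

end Multigraph

namespace Multigraph

variable {G : Multigraph}

/-- From a walk with distinct endpoints, extract an edge incident to either endpoint. -/
lemma exists_edge_at_end :
    ∀ {vs : List G.V} {es : List G.E}, G.IsWalk vs es → ∀ {a b c : G.V},
      vs.head? = some a → vs.getLast? = some b → (c = a ∨ c = b) → a ≠ b →
      ∃ e ∈ es, c ∈ G.ends e := by
  intro vs es hw
  induction hw with
  | nil v =>
      intro a b c ha hb hc hab
      simp only [List.head?_cons, Option.some.injEq] at ha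
      simp only [List.getLast?_singleton, Option.some.injEq] at hb
      exact absurd (ha.symm.trans hb) hab
  | @cons v vs es u e he hw ih =>
      intro a b c ha hb hc hab
      simp only [List.head?_cons, Option.some.injEq] at ha
      rw [List.getLast?_cons_cons] at hb
      rcases hc with rfl | rfl
      · exact ⟨e, List.mem_cons_self, by rw [he, ← ha]; exact Sym2.mem_mk_left _ _⟩
      · by_cases hvb : v = c
        · exact ⟨e, List.mem_cons_self, by rw [he, hvb]; exact Sym2.mem_mk_right _ _⟩
        · obtain ⟨e', he'1, he'2⟩ := ih (a := v) (b := c) (c := c) rfl hb (Or.inr rfl) hvb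
          exact ⟨e', List.mem_cons_of_mem _ he'1, he'2⟩

/-- A walk from inside `U` to outside `U` uses an edge of the cut `δ(U)`. -/
lemma exists_cut_edge {U : Set G.V} :
    ∀ {vs : List G.V} {es : List G.E}, G.IsWalk vs es → ∀ {a b : G.V},
      vs.head? = some a → vs.getLast? = some b → a ∈ U → b ∉ U →
      ∃ e ∈ es, e ∈ G.edgeCut U := by
  intro vs es hw
  induction hw with
  | nil v =>
      intro a b ha hb haU hbU
      simp only [List.head?_cons, Option.some.injEq] at ha
      simp only [List.getLast?_singleton, Option.some.injEq] at hb
      exact absurd (ha ▸ haU) (hb ▸ hbU)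
  | @cons v vs es u e he hw ih =>
      intro a b ha hb haU hbU
      simp only [List.head?_cons, Option.some.injEq] at ha
      rw [List.getLast?_cons_cons] at hb
      by_cases hvU : v ∈ U
      · obtain ⟨e', he'1, he'2⟩ := ih rfl hb hvU hbU
        exact ⟨e', List.mem_cons_of_mem _ he'1, he'2⟩
      · exact ⟨e, List.mem_cons_self, ⟨u, v, he, ha ▸ haU, hvU⟩⟩

/-- Crossing in the reverse direction. -/
lemma exists_cut_edge' {U : Set G.V} {vs : List G.V} {es : List G.E}
    (hw : G.IsWalk vs es) {a b : G.V}
    (ha : vs.head? = some a) (hb : vs.getLast? = some b) (haU : a ∉ U) (hbU : b ∈ U) :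
    ∃ e ∈ es, e ∈ G.edgeCut U := by
  obtain ⟨e, he1, x, y, hxy, hx, hy⟩ :=
    exists_cut_edge (U := Uᶜ) hw ha hb haU (by simpa using hbU)
  exact ⟨e, he1, y, x, hxy.trans (Sym2.eq_swap), by simpa using hy, by simpa using hx⟩

lemma TreeCutDecomp.proj_eq_inl (D : TreeCutDecomp G) {t : D.T} {v : G.V}
    (hv : v ∈ D.bag t) : D.proj t v = Sum.inl ⟨v, hv⟩ := by
  simp only [TreeCutDecomp.proj, dif_pos hv]

lemma TreeCutDecomp.proj_ne (D : TreeCutDecomp G) {t : D.T} {v w : G.V}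
    (hv : v ∈ D.bag t) (hwv : w ≠ v) : D.proj t w ≠ D.proj t v := by
  rw [D.proj_eq_inl hv]
  by_cases hw : w ∈ D.bag t
  · rw [D.proj_eq_inl hw]
    simp [hwv]
  · simp only [TreeCutDecomp.proj, dif_neg hw]
    simp

end Multigraph

open Multigraph in
/-- a graph with a tree-cut decomposition of adhesion less than `r`
whose torsos have `(r, r)`-bounded degree has no `K_{r+1}` immersion. -/
theorem no_clique_immersion_of_treeCutDecomp (r : ℕ) (hr : 1 ≤ r) (G : Multigraph)
    (D : TreeCutDecomp G) (hadh : D.adhesion < r)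
    (htorso : ∀ t : D.T, {v : (D.torso t).V | r ≤ (D.torso t).degree v}.ncard ≤ r) :
    ¬ G.Immerses (completeGraph (r + 1)) := by
  classical
  rintro ⟨I⟩
  -- each branch vertex lives in some bag
  choose tt htt using fun x : Fin (r + 1) => D.covers (I.vmap x)
  -- Step 1: all branch vertices lie in the same bag
  have hsame : ∀ x y : Fin (r + 1), tt x = tt y := by
    by_contra h
    push_neg at h
    obtain ⟨x0, y0, hne⟩ := h
    obtain ⟨w⟩ := D.isTree.isConnected.preconnected (tt x0) (tt y0)
    obtain ⟨u1, hadj, q, hq⟩ := SimpleGraph.Walk.exists_eq_cons_of_ne hne w.toPath.val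
    have hP : (SimpleGraph.Walk.cons hadj q).IsPath := hq ▸ w.toPath.prop
    rw [SimpleGraph.Walk.cons_isPath_iff] at hP
    set U : Set G.V := D.sideSet (tt x0) u1 with hUdef
    have hreach : (D.tree.deleteEdges {s(tt x0, u1)}).Reachable u1 (tt y0) := by
      refine ⟨q.toDeleteEdges _ fun e he hmem => ?_⟩
      rw [Set.mem_singleton_iff] at hmem
      subst hmem
      exact hP.2 (q.fst_mem_support_of_mem_edges he)
    have hyU : I.vmap y0 ∈ U := ⟨tt y0, hreach, htt y0⟩
    have hxU : I.vmap x0 ∉ U := by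
      rintro ⟨s, hs, hbag⟩
      have hstx : s = tt x0 := by
        by_contra hne'
        exact Set.disjoint_left.mp (D.disj s (tt x0) hne') hbag (htt x0)
      subst hstx
      have hbridge := SimpleGraph.isAcyclic_iff_forall_adj_isBridge.mp D.isTree.IsAcyclic hadj
      exact (SimpleGraph.isBridge_iff.mp hbridge) hs.symm
    set S : Set (Fin (r + 1)) := {z | I.vmap z ∈ U} with hSdef
    -- for every crossing pair, the connecting path uses a cut edge
    have key : ∀ p : ↥S × ↥Sᶜ, ∃ (f : (Multigraph.completeGraph (r + 1)).E) (e : G.E),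
        (Multigraph.completeGraph (r + 1)).ends f = s(p.1.1, p.2.1) ∧ e ∈ I.pedges f ∧ e ∈ G.edgeCut U := by
      rintro ⟨⟨a, ha⟩, ⟨b, hb⟩⟩
      have hab : a ≠ b := by rintro rfl; exact hb ha
      have hnd : ¬ (s(a, b) : Sym2 (Fin (r + 1))).IsDiag := by
        rw [Sym2.mk_isDiag_iff]; exact hab
      set f : (Multigraph.completeGraph (r + 1)).E := ⟨s(a, b), hnd⟩ with hfdef
      obtain ⟨x', y', hxy', hw, hnd', hh, hl⟩ := I.is_path f
      have hxy2 : s(a, b) = s(x', y') := hxy'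
      have haU : I.vmap a ∈ U := ha
      have hbU : I.vmap b ∉ U := hb
      rcases Sym2.eq_iff.mp hxy2 with ⟨rfl, rfl⟩ | ⟨rfl, rfl⟩
      · obtain ⟨e, he1, he2⟩ := exists_cut_edge hw hh hl haU hbU
        exact ⟨f, e, rfl, he1, he2⟩
      · obtain ⟨e, he1, he2⟩ := exists_cut_edge' hw hh hl hbU haU
        exact ⟨f, e, rfl, he1, he2⟩
    choose Kf Ke hKf hKmem hKcut using key
    have hinj : Function.Injective fun p : ↥S × ↥Sᶜ => (⟨Ke p, hKcut p⟩ : ↥(G.edgeCut U)) := by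
      intro p p' hpp'
      have hKe : Ke p = Ke p' := congrArg Subtype.val hpp'
      by_contra hppne
      have hfne : Kf p ≠ Kf p' := by
        intro hf
        have h1 : s(p.1.1, p.2.1) = s(p'.1.1, p'.2.1) :=
          (hKf p).symm.trans ((congrArg _ hf).trans (hKf p'))
        rcases Sym2.eq_iff.mp h1 with ⟨h2, h3⟩ | ⟨h2, h3⟩
        · exact hppne (Prod.ext (Subtype.ext h2) (Subtype.ext h3))
        · exact p'.2.2 (h2 ▸ p.1.2)
      exact I.edge_disjoint _ _ hfne (Ke p) (hKmem p) (hKe ▸ hKmem p')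
    have hcard : Nat.card (↥S × ↥Sᶜ) ≤ (G.edgeCut U).ncard := by
      rw [← Nat.card_coe_set_eq]
      exact Nat.card_le_card_of_injective _ hinj
    rw [Nat.card_prod] at hcard
    have hsum : Nat.card ↥S + Nat.card ↥Sᶜ = r + 1 := by
      rw [Nat.card_coe_set_eq, Nat.card_coe_set_eq, Set.ncard_add_ncard_compl,
        Nat.card_eq_fintype_card, Fintype.card_fin]
    have hSpos : 1 ≤ Nat.card ↥S := by
      have : Nonempty ↥S := ⟨⟨y0, hyU⟩⟩
      exact Nat.card_pos
    have hScpos : 1 ≤ Nat.card ↥Sᶜ := by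
      have : Nonempty ↥Sᶜ := ⟨⟨x0, hxU⟩⟩
      exact Nat.card_pos
    have hprod : r ≤ Nat.card ↥S * Nat.card ↥Sᶜ := by
      obtain ⟨a, ha⟩ := Nat.exists_eq_add_of_le hSpos
      obtain ⟨b, hb⟩ := Nat.exists_eq_add_of_le hScpos
      rw [ha, hb]
      have : (1 + a) * (1 + b) = a * b + a + b + 1 := by ring
      omega
    have hle : (G.edgeCut U).ncard ≤ D.adhesion := by
      apply le_csSup
      · refine ⟨Nat.card G.E, ?_⟩
        rintro n ⟨u, v, -, rfl⟩
        rw [← Set.ncard_univ]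
        exact Set.ncard_le_ncard (Set.subset_univ _) Set.finite_univ
      · exact ⟨tt x0, u1, hadj, rfl⟩
    omega
  -- the common bag
  set t : D.T := tt ⟨0, by omega⟩ with htdef
  have ht : ∀ x : Fin (r + 1), I.vmap x ∈ D.bag t := fun x => by
    have h := htt x; rwa [hsame x ⟨0, by omega⟩] at h
  -- Step 2: each branch vertex has torso degree ≥ r
  have hdeg : ∀ x : Fin (r + 1), r ≤ (D.torso t).degree (Sum.inl ⟨I.vmap x, ht x⟩) := by
    intro x
    have key : ∀ y : {y : Fin (r + 1) // y ≠ x}, ∃ (f : (Multigraph.completeGraph (r + 1)).E) (e : G.E),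
        (Multigraph.completeGraph (r + 1)).ends f = s(x, y.1) ∧ e ∈ I.pedges f ∧ I.vmap x ∈ G.ends e := by
      rintro ⟨y, hyx⟩
      have hnd : ¬ (s(x, y) : Sym2 (Fin (r + 1))).IsDiag := by
        rw [Sym2.mk_isDiag_iff]; exact fun h => hyx h.symm
      set f : (Multigraph.completeGraph (r + 1)).E := ⟨s(x, y), hnd⟩ with hfdef
      obtain ⟨x', y', hxy', hw, hnd', hh, hl⟩ := I.is_path f
      have hxy2 : s(x, y) = s(x', y') := hxy'
      have hvne : I.vmap x' ≠ I.vmap y' := by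
        intro h
        have : x' = y' := I.vmap_inj h
        subst this
        rcases Sym2.eq_iff.mp hxy2 with ⟨h1, h2⟩ | ⟨h1, h2⟩ <;> exact hyx (by omega)
      rcases Sym2.eq_iff.mp hxy2 with ⟨rfl, rfl⟩ | ⟨rfl, rfl⟩
      · obtain ⟨e, he1, he2⟩ := exists_edge_at_end hw hh hl (Or.inl rfl) hvne
        exact ⟨f, e, rfl, he1, he2⟩
      · obtain ⟨e, he1, he2⟩ := exists_edge_at_end hw hh hl (Or.inr rfl) hvne
        exact ⟨f, e, rfl, he1, he2⟩
    choose Kf Ke hKf hKmem hKinc using key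
    have hKtorso : ∀ y, ∃ he : ¬ (Sym2.map (D.proj t) (G.ends (Ke y))).IsDiag,
        Sum.inl ⟨I.vmap x, ht x⟩ ∈ (D.torso t).ends ⟨Ke y, he⟩ := by
      intro y
      obtain ⟨w', hw'⟩ := Sym2.mem_iff_exists.mp (hKinc y)
      have hwne : w' ≠ I.vmap x := by
        rintro rfl
        exact G.no_loops (Ke y) (by rw [hw']; exact Sym2.mk_isDiag_iff.mpr rfl)
      have hnd : ¬ (Sym2.map (D.proj t) (G.ends (Ke y))).IsDiag := by
        rw [hw', Sym2.map_pair_eq, Sym2.mk_isDiag_iff]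
        exact fun h => D.proj_ne (ht x) hwne h.symm
      refine ⟨hnd, ?_⟩
      show Sum.inl ⟨I.vmap x, ht x⟩ ∈ Sym2.map (D.proj t) (G.ends (Ke y))
      rw [hw', Sym2.map_pair_eq, D.proj_eq_inl (ht x)]
      exact Sym2.mem_mk_left _ _
    choose hnd hmem using hKtorso
    have hinj : Function.Injective fun y : {y : Fin (r + 1) // y ≠ x} =>
        (⟨⟨Ke y, hnd y⟩, hmem y⟩ :
          {e : (D.torso t).E // Sum.inl ⟨I.vmap x, ht x⟩ ∈ (D.torso t).ends e}) := by
      intro y y' hyy'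
      have hKe : Ke y = Ke y' := congrArg (fun z => z.val.val) hyy'
      by_contra hyne
      have hfne : Kf y ≠ Kf y' := by
        intro hf
        have h1 : s(x, y.1) = s(x, y'.1) :=
          (hKf y).symm.trans ((congrArg _ hf).trans (hKf y'))
        rcases Sym2.eq_iff.mp h1 with ⟨-, h3⟩ | ⟨h2, -⟩
        · exact hyne (Subtype.ext h3)
        · exact y'.2 h2.symm
      exact I.edge_disjoint _ _ hfne (Ke y) (hKmem y) (hKe ▸ hKmem y')
    have hcY : r ≤ Nat.card {y : Fin (r + 1) // y ≠ x} := by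
      have h1 : Nat.card {y : Fin (r + 1) // y ≠ x} = Nat.card ↥({x}ᶜ : Set (Fin (r + 1))) :=
        Nat.card_congr (Equiv.subtypeEquivRight (by simp))
      have h2 := Set.ncard_add_ncard_compl ({x} : Set (Fin (r + 1)))
      rw [Set.ncard_singleton, Nat.card_eq_fintype_card, Fintype.card_fin] at h2
      rw [h1, Nat.card_coe_set_eq]
      omega
    calc r ≤ Nat.card {y : Fin (r + 1) // y ≠ x} := hcY
      _ ≤ Nat.card {e : (D.torso t).E // Sum.inl ⟨I.vmap x, ht x⟩ ∈ (D.torso t).ends e} :=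
          Nat.card_le_card_of_injective _ hinj
      _ = (D.torso t).degree (Sum.inl ⟨I.vmap x, ht x⟩) := rfl
  -- Step 3: contradiction with the torso bound
  have hfinal : r + 1 ≤ {v : (D.torso t).V | r ≤ (D.torso t).degree v}.ncard := by
    rw [← Nat.card_coe_set_eq]
    have hinj : Function.Injective fun x : Fin (r + 1) =>
        (⟨Sum.inl ⟨I.vmap x, ht x⟩, hdeg x⟩ :
          {v : (D.torso t).V | r ≤ (D.torso t).degree v}) := by
      intro a b hab
      have : (Sum.inl ⟨I.vmap a, ht a⟩ : (D.torso t).V) = Sum.inl ⟨I.vmap b, ht b⟩ :=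
        congrArg Subtype.val hab
      simp only [Sum.inl.injEq, Subtype.mk.injEq] at this
      exact I.vmap_inj this
    calc r + 1 = Nat.card (Fin (r + 1)) := by
          rw [Nat.card_eq_fintype_card, Fintype.card_fin]
      _ ≤ _ := Nat.card_le_card_of_injective _ hinj
  have := htorso t
  omega
end

section
/- Let G be a graph and X ⊆ V(G). There is a unique maximal graph H (with respect to immersion containment) admitting a weak immersion (π_v, π_e) in G such that X ⊆ π_v(V(H)) and every vertex x of H with degree at most 2 satisfies π_v(x) ∈ X. Equivalently, this 3-center is the graph obtained from G by repeatedly suppressing vertices of V(G) − X having degree at most two. -/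
open Sym2

namespace Multigraph

variable {G : Multigraph}

section ThreeCenterProof

attribute [local instance] Classical.propDecidable

lemma exists_ends (G : Multigraph) (e : G.E) : ∃ x y, G.ends e = s(x, y) ∧ x ≠ y := by
  have key : ∀ q : Sym2 G.V, ¬ q.IsDiag → ∃ x y, q = s(x, y) ∧ x ≠ y := by
    intro q
    induction q using Sym2.ind with
    | _ x y => intro hd; exact ⟨x, y, rfl, by simpa [Sym2.mk_isDiag_iff] using hd⟩
  exact key _ (G.no_loops e)

lemma exists_other {v : G.V} {e : G.E} (he : v ∈ G.ends e) :
    ∃ a, a ≠ v ∧ G.ends e = s(v, a) := by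
  obtain ⟨x, y, hxy, hne⟩ := exists_ends G e
  rw [hxy, Sym2.mem_iff] at he
  rcases he with rfl | rfl
  · exact ⟨y, fun h => hne h.symm, hxy⟩
  · exact ⟨x, hne, by rw [hxy, Sym2.eq_swap]⟩

lemma IsWalk.ne_nil {vs : List G.V} {es : List G.E} (h : G.IsWalk vs es) : vs ≠ [] := by
  cases h <;> simp

lemma IsWalk.edge_mem_ends {vs : List G.V} {es : List G.E} (h : G.IsWalk vs es)
    {e : G.E} (he : e ∈ es) : ∃ p q, G.ends e = s(p, q) ∧ p ∈ vs ∧ q ∈ vs := by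
  induction h with
  | nil => simp at he
  | cons u e' he' hw ih =>
    rcases List.mem_cons.1 he with rfl | hmem
    · exact ⟨u, _, he', by simp, by simp⟩
    · obtain ⟨p, q, h1, h2, h3⟩ := ih hmem
      exact ⟨p, q, h1, List.mem_cons_of_mem _ h2, List.mem_cons_of_mem _ h3⟩

lemma IsWalk.edges_nodup {vs : List G.V} {es : List G.E} (h : G.IsWalk vs es)
    (hn : vs.Nodup) : es.Nodup := by
  induction h with
  | nil => simp
  | @cons w vs' es' u e he hw ih =>
    rw [List.nodup_cons] at hn ⊢
    refine ⟨fun hmem => ?_, ih hn.2⟩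
    obtain ⟨p, q, h1, h2, h3⟩ := hw.edge_mem_ends hmem
    rw [he] at h1
    have : u ∈ (w :: vs') := by
      rcases Sym2.eq_iff.1 h1 with ⟨rfl, rfl⟩ | ⟨rfl, rfl⟩
      · exact h2
      · exact h3
    exact hn.1 this

lemma IsWalk.exists_incident {vs : List G.V} {es : List G.E} (h : G.IsWalk vs es)
    {u : G.V} (hu : u ∈ vs) (hl : 2 ≤ vs.length) : ∃ e ∈ es, u ∈ G.ends e := by
  induction h with
  | nil => simp at hl
  | @cons w vs' es' u' e he hw ih =>
    rcases List.mem_cons.1 hu with rfl | hmem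
    · exact ⟨e, by simp, by rw [he]; exact Sym2.mem_mk_left _ _⟩
    · rcases vs' with _ | ⟨c, rest⟩
      · have : u = w := by simpa using hmem
        subst this
        exact ⟨e, by simp, by rw [he]; exact Sym2.mem_mk_right _ _⟩
      · obtain ⟨e', h1, h2⟩ := ih hmem (by simp)
        exact ⟨e', List.mem_cons_of_mem _ h1, h2⟩

lemma one_le_degree {v : G.V} {e : G.E} (he : v ∈ G.ends e) : 1 ≤ G.degree v := by
  have : Nonempty {e : G.E // v ∈ G.ends e} := ⟨⟨e, he⟩⟩
  exact Nat.one_le_iff_ne_zero.2 (Nat.card_ne_zero.2 ⟨this, inferInstance⟩)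

lemma three_le_degree {v : G.V} {e₁ e₂ e₃ : G.E} (h₁ : v ∈ G.ends e₁)
    (h₂ : v ∈ G.ends e₂) (h₃ : v ∈ G.ends e₃) (d₁₂ : e₁ ≠ e₂) (d₁₃ : e₁ ≠ e₃)
    (d₂₃ : e₂ ≠ e₃) : 3 ≤ G.degree v := by
  have hinj : Function.Injective
      (fun i : Fin 3 => (![⟨e₁, h₁⟩, ⟨e₂, h₂⟩, ⟨e₃, h₃⟩] i : {e : G.E // v ∈ G.ends e})) := by
    intro i j hij
    fin_cases i <;> fin_cases j <;> simp_all [Subtype.ext_iff] <;> first | rfl | (exfalso ; tauto)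
  have := Nat.card_le_card_of_injective _ hinj
  simpa [degree] using this

lemma IsPathBetween.two_le_length {a b : G.V} {vs : List G.V} {es : List G.E}
    (h : G.IsPathBetween a b vs es) (hab : a ≠ b) : 2 ≤ vs.length := by
  obtain ⟨hw, -, hhd, hlast⟩ := h
  rcases vs with _ | ⟨x, _ | ⟨y, t⟩⟩
  · simp at hhd
  · simp at hhd hlast
    exact absurd (hhd.symm.trans hlast) hab
  · simp

lemma head?_map_filter {α β : Type} (σ : α → β) (v : α) {vs : List α} {b : α}
    (hhd : vs.head? = some b) (hb : b ≠ v) :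
    ((vs.filter (fun x => x ≠ v)).map σ).head? = some (σ b) := by
  rcases vs with _ | ⟨x, t⟩
  · simp at hhd
  · simp only [List.head?_cons, Option.some.injEq] at hhd
    subst hhd
    rw [List.filter_cons_of_pos (by simpa using hb)]
    simp

lemma getLast?_map_filter {α β : Type} (σ : α → β) (v : α) {vs : List α} {b : α}
    (hlast : vs.getLast? = some b) (hb : b ≠ v) :
    ((vs.filter (fun x => x ≠ v)).map σ).getLast? = some (σ b) := by
  rw [List.getLast?_eq_head?_reverse] at hlast ⊢
  rw [← List.map_reverse, ← List.filter_reverse]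
  exact head?_map_filter σ v hlast hb

lemma nodup_map_filter {α β : Type} (σ : α → β) (v : α)
    (hσ : ∀ x y, x ≠ v → y ≠ v → (σ x = σ y ↔ x = y)) {vs : List α} (h : vs.Nodup) :
    ((vs.filter (fun x => x ≠ v)).map σ).Nodup := by
  refine (h.filter _).map_on ?_
  intro x hx y hy hxy
  rw [List.mem_filter, decide_eq_true_eq] at hx hy
  exact (hσ x y hx.2 hy.2).1 hxy

lemma push_walk {G G' : Multigraph} (v : G.V) (σ : G.V → G'.V)
    (hσ : ∀ x y, x ≠ v → y ≠ v → (σ x = σ y ↔ x = y))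
    (hdeg : G.degree v ≤ 2)
    (hA : ∀ e : G.E, v ∈ G.ends e → ∃ a, a ≠ v ∧ σ v = σ a ∧ ∃ e₀, G.ends e₀ = s(v, a))
    (τ : {e : G.E // ¬ (Sym2.map σ (G.ends e)).IsDiag} ≃ G'.E)
    (hτ : ∀ e, G'.ends (τ e) = Sym2.map σ (G.ends e.val)) :
    ∀ (n : ℕ) (vs : List G.V) (es : List G.E), vs.length ≤ n → G.IsWalk vs es →
      vs.Nodup → vs.head? ≠ some v → vs.getLast? ≠ some v →
      ∃ es', G'.IsWalk ((vs.filter (fun x => x ≠ v)).map σ) es' ∧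
        ∀ e' ∈ es', ((τ.symm e' : {e : G.E // _}) : G.E) ∈ es := by
  intro n
  induction n using Nat.strong_induction_on with
  | _ n ih =>
  intro vs es hlen hw hnd hhd hlast
  cases hw with
  | nil v₀ =>
    have hv₀ : v₀ ≠ v := by simpa using hhd
    refine ⟨[], ?_, by simp⟩
    rw [List.filter_cons_of_pos (by simpa using hv₀)]
    exact IsWalk.nil (σ v₀)
  | @cons w rest es₂ u e he hw' =>
    have hu : u ≠ v := by simpa using hhd
    by_cases hwv : w = v
    · have hwv' := hwv.symm
      subst hwv'
      -- w = v : the walk passes through v; rest must be nonempty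
      rcases rest with _ | ⟨c, rest'⟩
      · simp at hlast
      cases hw' with
      | @cons _ _ es₃ _ e₂ he₂ hw'' =>
      -- he : ends e = s(u, v), he₂ : ends e₂ = s(v, c)
      have hndtail : (v :: c :: rest').Nodup := (List.nodup_cons.1 hnd).2
      have hnd' : (c :: rest').Nodup := (List.nodup_cons.1 hndtail).2
      have hvnotin : v ∉ c :: rest' := (List.nodup_cons.1 hndtail).1
      have hunot : u ∉ v :: c :: rest' := (List.nodup_cons.1 hnd).1
      have hcv : c ≠ v := fun h => hvnotin (by simp [h.symm])
      have huc : u ≠ c := fun h => hunot (by simp [h])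
      have hve : v ∈ G.ends e := by rw [he]; exact Sym2.mem_mk_right _ _
      have hve₂ : v ∈ G.ends e₂ := by rw [he₂]; exact Sym2.mem_mk_left _ _
      have hee₂ : e ≠ e₂ := by
        intro h
        rw [h, he₂] at he
        rcases Sym2.eq_iff.1 he with ⟨h1, h2⟩ | ⟨h1, h2⟩
        · exact hu h1.symm
        · exact huc h2.symm
      obtain ⟨a, hav, hσva, e₀, he₀⟩ := hA e hve
      have hve₀ : v ∈ G.ends e₀ := by rw [he₀]; exact Sym2.mem_mk_left _ _
      have he₀mem : e₀ = e ∨ e₀ = e₂ := by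
        by_contra hcon
        push_neg at hcon
        have := three_le_degree hve hve₂ hve₀ hee₂ (Ne.symm hcon.1) (Ne.symm hcon.2)
        omega
      -- IH application on (c :: rest', es₃)
      have hlast' : (c :: rest').getLast? ≠ some v := by
        rw [List.getLast?_cons_cons, List.getLast?_cons_cons] at hlast
        exact hlast
      obtain ⟨es₃', hwalk', hmem'⟩ := ih (n - 2) (by simp at hlen; omega) (c :: rest') es₃
        (by simp at hlen ⊢; omega) hw'' hnd' (by simpa using hcv) hlast'
      have hfilter : ((u :: v :: c :: rest').filter (fun x => x ≠ v)).map σ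
          = σ u :: ((c :: rest').filter (fun x => x ≠ v)).map σ := by
        rw [List.filter_cons_of_pos (by simpa using hu), List.filter_cons_of_neg (by simp)]
        simp
      have hfilter₂ : ((c :: rest').filter (fun x => x ≠ v)).map σ
          = σ c :: ((rest').filter (fun x => x ≠ v)).map σ := by
        rw [List.filter_cons_of_pos (by simpa using hcv)]
        simp
      rcases he₀mem with rfl | rfl
      · -- e₀ = e : so a = u, σ v = σ u ; keep e₂, drop e
        have hau : a = u := by
          rw [he₀] at he
          rcases Sym2.eq_iff.1 he with ⟨h1, h2⟩ | ⟨h1, h2⟩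
          · exact absurd h2 hav
          · exact h2
        subst hau
        have hkept : ¬ (Sym2.map σ (G.ends e₂)).IsDiag := by
          rw [he₂, Sym2.map_pair_eq, Sym2.mk_isDiag_iff]
          intro h
          exact huc ((hσ a c hav hcv).1 (hσva.symm.trans h))
        refine ⟨τ ⟨e₂, hkept⟩ :: es₃', ?_, ?_⟩
        · rw [hfilter, hfilter₂]
          rw [hfilter₂] at hwalk'
          refine IsWalk.cons (σ a) (τ ⟨e₂, hkept⟩) ?_ hwalk'
          rw [hτ, he₂, Sym2.map_pair_eq, ← hσva]
        · intro e' he'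
          rcases List.mem_cons.1 he' with rfl | hm
          · simp only [Equiv.symm_apply_apply]
            exact List.mem_cons_of_mem _ (List.mem_cons_self)
          · exact List.mem_cons_of_mem _ (List.mem_cons_of_mem _ (hmem' e' hm))
      · -- e₀ = e₂ : a = c, σ v = σ c ; keep e, drop e₂
        have hac : a = c := by
          rw [he₀] at he₂
          rcases Sym2.eq_iff.1 he₂ with ⟨h1, h2⟩ | ⟨h1, h2⟩
          · exact h2
          · exact absurd h2 hav
        subst hac
        have hkept : ¬ (Sym2.map σ (G.ends e)).IsDiag := by
          rw [he, Sym2.map_pair_eq, Sym2.mk_isDiag_iff]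
          intro h
          exact huc ((hσ u a hu hav).1 (h.trans hσva))
        refine ⟨τ ⟨e, hkept⟩ :: es₃', ?_, ?_⟩
        · rw [hfilter, hfilter₂]
          rw [hfilter₂] at hwalk'
          refine IsWalk.cons (σ u) (τ ⟨e, hkept⟩) ?_ hwalk'
          rw [hτ, he, Sym2.map_pair_eq, hσva]
        · intro e' he'
          rcases List.mem_cons.1 he' with rfl | hm
          · simp only [Equiv.symm_apply_apply]
            exact List.mem_cons_self
          · exact List.mem_cons_of_mem _ (List.mem_cons_of_mem _ (hmem' e' hm))
    · -- w ≠ v : keep edge e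
      have huw : u ≠ w := by
        simp only [List.nodup_cons, List.mem_cons] at hnd
        exact fun h => hnd.1 (Or.inl h)
      have hkept : ¬ (Sym2.map σ (G.ends e)).IsDiag := by
        rw [he, Sym2.map_pair_eq, Sym2.mk_isDiag_iff]
        exact fun h => huw ((hσ u w hu hwv).1 h)
      have hnd' : (w :: rest).Nodup := (List.nodup_cons.1 hnd).2
      have hlast' : (w :: rest).getLast? ≠ some v := by
        rwa [List.getLast?_cons_cons] at hlast
      obtain ⟨es₂', hwalk', hmem'⟩ := ih (n - 1) (by simp at hlen; omega) (w :: rest) es₂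
        (by simp at hlen ⊢; omega) hw' hnd' (by simpa using hwv) hlast'
      have hfilter : ((u :: w :: rest).filter (fun x => x ≠ v)).map σ
          = σ u :: ((w :: rest).filter (fun x => x ≠ v)).map σ := by
        rw [List.filter_cons_of_pos (by simpa using hu)]
        simp
      have hfilter₂ : ((w :: rest).filter (fun x => x ≠ v)).map σ
          = σ w :: ((rest).filter (fun x => x ≠ v)).map σ := by
        rw [List.filter_cons_of_pos (by simpa using hwv)]
        simp
      refine ⟨τ ⟨e, hkept⟩ :: es₂', ?_, ?_⟩
      · rw [hfilter, hfilter₂]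
        rw [hfilter₂] at hwalk'
        refine IsWalk.cons (σ u) (τ ⟨e, hkept⟩) ?_ hwalk'
        rw [hτ, he, Sym2.map_pair_eq]
      · intro e' he'
        rcases List.mem_cons.1 he' with rfl | hm
        · simp only [Equiv.symm_apply_apply]
          exact List.mem_cons_self
        · exact List.mem_cons_of_mem _ (hmem' e' hm)

lemma lift_walk {G G' : Multigraph} (v : G.V) (σ : G.V → G'.V)
    (hσ : ∀ x y, x ≠ v → y ≠ v → (σ x = σ y ↔ x = y))
    (ρ : G'.V → G.V) (hρv : ∀ y, ρ y ≠ v) (hρ : ∀ y, σ (ρ y) = y)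
    (hdeg : G.degree v ≤ 2)
    (hA : ∀ e : G.E, v ∈ G.ends e → ∃ a, a ≠ v ∧ σ v = σ a ∧ ∃ e₀, G.ends e₀ = s(v, a))
    (τ : {e : G.E // ¬ (Sym2.map σ (G.ends e)).IsDiag} ≃ G'.E)
    (hτ : ∀ e, G'.ends (τ e) = Sym2.map σ (G.ends e.val)) :
    ∀ (vs' : List G'.V) (es' : List G'.E), G'.IsWalk vs' es' → vs'.Nodup → es'.Nodup →
    ∃ vs es, G.IsWalk vs es ∧ vs.Nodup ∧
      (∀ b, vs'.head? = some b → vs.head? = some (ρ b)) ∧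
      (∀ b, vs'.getLast? = some b → vs.getLast? = some (ρ b)) ∧
      (v ∈ vs → ∃ e'' ∈ es', v ∈ G.ends (τ.symm e'').1) ∧
      (∀ w ∈ vs, w = v ∨ ∃ u ∈ vs', w = ρ u) ∧
      (∀ e ∈ es, (∃ e'' ∈ es', e = (τ.symm e'').1) ∨
        ((Sym2.map σ (G.ends e)).IsDiag ∧ v ∈ G.ends e ∧
          ∃ e'' ∈ es', v ∈ G.ends (τ.symm e'').1)) := by
  have hρinj : Function.Injective ρ := fun y z h => by rw [← hρ y, ← hρ z, h]
  intro vs' es' hw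
  induction hw with
  | nil y =>
    intro _ _
    refine ⟨[ρ y], [], IsWalk.nil _, by simp, ?_, ?_, ?_, ?_, by simp⟩
    · intro b hb; simp at hb; subst hb; simp
    · intro b hb; simp at hb; subst hb; simp
    · intro hv; simp at hv; exact absurd hv.symm (hρv y)
    · intro w hw; simp at hw; exact Or.inr ⟨y, by simp, hw⟩
  | @cons z rest es₂' y e'' he'' hw' ih =>
    intro hnd hnde
    obtain ⟨vsI, esI, hwI, hndI, hheadI, hlastI, hvI, horigI, hedgeI⟩ :=
      ih (List.nodup_cons.1 hnd).2 (List.nodup_cons.1 hnde).2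
    have he''nomem : e'' ∉ es₂' := (List.nodup_cons.1 hnde).1
    have hynomem : y ∉ z :: rest := (List.nodup_cons.1 hnd).1
    have hmap : Sym2.map σ (G.ends (τ.symm e'').1) = s(y, z) := by
      have h1 := hτ (τ.symm e'')
      rw [Equiv.apply_symm_apply] at h1
      rw [← h1, he'']
    obtain ⟨p, q, hpq, hpqne, hσp, hσq⟩ :
        ∃ p q, G.ends (τ.symm e'').1 = s(p, q) ∧ p ≠ q ∧ σ p = y ∧ σ q = z := by
      obtain ⟨p, q, hpq, hne⟩ := exists_ends G (τ.symm e'').1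
      rw [hpq, Sym2.map_pair_eq] at hmap
      rcases Sym2.eq_iff.1 hmap with ⟨h1, h2⟩ | ⟨h1, h2⟩
      · exact ⟨p, q, hpq, hne, h1, h2⟩
      · exact ⟨q, p, by rw [hpq]; exact Sym2.eq_swap, hne.symm, h2, h1⟩
    have hheadI' : vsI.head? = some (ρ z) := hheadI z rfl
    rcases vsI with _ | ⟨w0, tailI⟩
    · simp at hheadI'
    have hw0 : w0 = ρ z := by simpa using hheadI'
    subst hw0
    -- common facts
    have hρynot : ρ y ∉ ρ z :: tailI := by
      intro hmem
      rcases horigI _ hmem with h | ⟨u, humem, hu⟩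
      · exact hρv y h
      · exact hynomem (hρinj hu ▸ humem)
    have hnotv : v ∈ G.ends (τ.symm e'').1 → v ∉ ρ z :: tailI := by
      intro hve hvmem
      obtain ⟨d'', hd''mem, hvd⟩ := hvI hvmem
      have hdne : (τ.symm d'').1 ≠ (τ.symm e'').1 := by
        intro h
        exact he''nomem (τ.symm.injective (Subtype.ext h) ▸ hd''mem)
      obtain ⟨a, hav, hσva, e₀, he₀⟩ := hA _ hve
      have hve₀ : v ∈ G.ends e₀ := by rw [he₀]; exact Sym2.mem_mk_left _ _
      have he₀diag : (Sym2.map σ (G.ends e₀)).IsDiag := by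
        rw [he₀, Sym2.map_pair_eq, Sym2.mk_isDiag_iff]; exact hσva
      have h1 : (τ.symm e'').1 ≠ e₀ := fun h => (τ.symm e'').2 (h ▸ he₀diag)
      have h2 : (τ.symm d'').1 ≠ e₀ := fun h => (τ.symm d'').2 (h ▸ he₀diag)
      have := three_le_degree hve hvd hve₀ (Ne.symm hdne) h1 h2
      omega
    have hlastI' : ∀ b, (y :: z :: rest).getLast? = some b →
        ((z :: rest).getLast? = some b) := by
      intro b hb; rwa [List.getLast?_cons_cons] at hb
    by_cases hpv : p = v
    · -- first endpoint of the underlying edge is v : insert v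
      have hqv : q ≠ v := fun h => hpqne (hpv.trans h.symm)
      have hve : v ∈ G.ends (τ.symm e'').1 := by
        rw [hpq]; exact hpv ▸ Sym2.mem_mk_left p q
      obtain ⟨a, hav, hσva, e₀, he₀⟩ := hA _ hve
      have hρy : ρ y = a := by
        refine (hσ _ _ (hρv y) hav).1 ?_
        rw [hρ y, ← hσp, hpv, ← hσva]
      have hρz : ρ z = q := by
        refine (hσ _ _ (hρv z) hqv).1 ?_
        rw [hρ z, ← hσq]
      have he₀diag : (Sym2.map σ (G.ends e₀)).IsDiag := by
        rw [he₀, Sym2.map_pair_eq, Sym2.mk_isDiag_iff]; exact hσva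
      have hve₀ : v ∈ G.ends e₀ := by rw [he₀]; exact Sym2.mem_mk_left _ _
      refine ⟨ρ y :: v :: ρ z :: tailI, e₀ :: (τ.symm e'').1 :: esI, ?_, ?_, ?_, ?_, ?_, ?_, ?_⟩
      · refine IsWalk.cons (ρ y) e₀ ?_ (IsWalk.cons v (τ.symm e'').1 ?_ hwI)
        · rw [he₀, hρy]; exact Sym2.eq_swap
        · rw [hpq, hpv, hρz]
      · simp only [List.nodup_cons]
        refine ⟨?_, hnotv hve, List.nodup_cons.1 hndI⟩
        simp only [List.mem_cons, not_or]
        exact ⟨hρv y, fun h => hρynot (by simp [h]), fun h => hρynot (by simp [h])⟩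
      · intro b hb; simp only [List.head?_cons, Option.some.injEq] at hb ⊢; rw [hb]
      · intro b hb
        rw [List.getLast?_cons_cons, List.getLast?_cons_cons]
        exact hlastI b (hlastI' b hb)
      · intro _
        exact ⟨e'', List.mem_cons_self, hve⟩
      · intro w hwmem
        rcases List.mem_cons.1 hwmem with rfl | hwmem
        · exact Or.inr ⟨y, List.mem_cons_self, rfl⟩
        rcases List.mem_cons.1 hwmem with rfl | hwmem
        · exact Or.inl rfl
        · rcases horigI _ hwmem with h | ⟨u, humem, hu⟩
          · exact Or.inl h
          · exact Or.inr ⟨u, List.mem_cons_of_mem _ humem, hu⟩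
      · intro e hemem
        rcases List.mem_cons.1 hemem with rfl | hemem
        · exact Or.inr ⟨he₀diag, hve₀, e'', List.mem_cons_self, hve⟩
        rcases List.mem_cons.1 hemem with rfl | hemem
        · exact Or.inl ⟨e'', List.mem_cons_self, rfl⟩
        · rcases hedgeI e hemem with ⟨d'', hd, hd2⟩ | ⟨hd1, hd2, d'', hd3, hd4⟩
          · exact Or.inl ⟨d'', List.mem_cons_of_mem _ hd, hd2⟩
          · exact Or.inr ⟨hd1, hd2, d'', List.mem_cons_of_mem _ hd3, hd4⟩
    · by_cases hqv : q = v
      · -- second endpoint is v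
        have hve : v ∈ G.ends (τ.symm e'').1 := by
          rw [hpq]; exact hqv ▸ Sym2.mem_mk_right p q
        obtain ⟨a, hav, hσva, e₀, he₀⟩ := hA _ hve
        have hρy : ρ y = p := by
          refine (hσ _ _ (hρv y) hpv).1 ?_
          rw [hρ y, ← hσp]
        have hρz : ρ z = a := by
          refine (hσ _ _ (hρv z) hav).1 ?_
          rw [hρ z, ← hσq, hqv, ← hσva]
        have he₀diag : (Sym2.map σ (G.ends e₀)).IsDiag := by
          rw [he₀, Sym2.map_pair_eq, Sym2.mk_isDiag_iff]; exact hσva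
        have hve₀ : v ∈ G.ends e₀ := by rw [he₀]; exact Sym2.mem_mk_left _ _
        refine ⟨ρ y :: v :: ρ z :: tailI, (τ.symm e'').1 :: e₀ :: esI, ?_, ?_, ?_, ?_, ?_, ?_, ?_⟩
        · refine IsWalk.cons (ρ y) (τ.symm e'').1 ?_ (IsWalk.cons v e₀ ?_ hwI)
          · rw [hpq, hρy, hqv]
          · rw [he₀, hρz]
        · simp only [List.nodup_cons]
          refine ⟨?_, hnotv hve, List.nodup_cons.1 hndI⟩
          simp only [List.mem_cons, not_or]
          exact ⟨hρv y, fun h => hρynot (by simp [h]), fun h => hρynot (by simp [h])⟩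
        · intro b hb; simp only [List.head?_cons, Option.some.injEq] at hb ⊢; rw [hb]
        · intro b hb
          rw [List.getLast?_cons_cons, List.getLast?_cons_cons]
          exact hlastI b (hlastI' b hb)
        · intro _
          exact ⟨e'', List.mem_cons_self, hve⟩
        · intro w hwmem
          rcases List.mem_cons.1 hwmem with rfl | hwmem
          · exact Or.inr ⟨y, List.mem_cons_self, rfl⟩
          rcases List.mem_cons.1 hwmem with rfl | hwmem
          · exact Or.inl rfl
          · rcases horigI _ hwmem with h | ⟨u, humem, hu⟩
            · exact Or.inl h
            · exact Or.inr ⟨u, List.mem_cons_of_mem _ humem, hu⟩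
        · intro e hemem
          rcases List.mem_cons.1 hemem with rfl | hemem
          · exact Or.inl ⟨e'', List.mem_cons_self, rfl⟩
          rcases List.mem_cons.1 hemem with rfl | hemem
          · exact Or.inr ⟨he₀diag, hve₀, e'', List.mem_cons_self, hve⟩
          · rcases hedgeI e hemem with ⟨d'', hd, hd2⟩ | ⟨hd1, hd2, d'', hd3, hd4⟩
            · exact Or.inl ⟨d'', List.mem_cons_of_mem _ hd, hd2⟩
            · exact Or.inr ⟨hd1, hd2, d'', List.mem_cons_of_mem _ hd3, hd4⟩
      · -- neither endpoint is v
        have hρy : ρ y = p := by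
          refine (hσ _ _ (hρv y) hpv).1 ?_
          rw [hρ y, ← hσp]
        have hρz : ρ z = q := by
          refine (hσ _ _ (hρv z) hqv).1 ?_
          rw [hρ z, ← hσq]
        refine ⟨ρ y :: ρ z :: tailI, (τ.symm e'').1 :: esI, ?_, ?_, ?_, ?_, ?_, ?_, ?_⟩
        · refine IsWalk.cons (ρ y) (τ.symm e'').1 ?_ hwI
          rw [hpq, hρy, hρz]
        · exact List.nodup_cons.2 ⟨hρynot, hndI⟩
        · intro b hb; simp only [List.head?_cons, Option.some.injEq] at hb ⊢; rw [hb]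
        · intro b hb
          rw [List.getLast?_cons_cons]
          exact hlastI b (hlastI' b hb)
        · intro hvmem
          rcases List.mem_cons.1 hvmem with h | hvmem
          · exact absurd h.symm (hρv y)
          · obtain ⟨d'', hd, hd2⟩ := hvI hvmem
            exact ⟨d'', List.mem_cons_of_mem _ hd, hd2⟩
        · intro w hwmem
          rcases List.mem_cons.1 hwmem with rfl | hwmem
          · exact Or.inr ⟨y, List.mem_cons_self, rfl⟩
          · rcases horigI _ hwmem with h | ⟨u, humem, hu⟩
            · exact Or.inl h
            · exact Or.inr ⟨u, List.mem_cons_of_mem _ humem, hu⟩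
        · intro e hemem
          rcases List.mem_cons.1 hemem with rfl | hemem
          · exact Or.inl ⟨e'', List.mem_cons_self, rfl⟩
          · rcases hedgeI e hemem with ⟨d'', hd, hd2⟩ | ⟨hd1, hd2, d'', hd3, hd4⟩
            · exact Or.inl ⟨d'', List.mem_cons_of_mem _ hd, hd2⟩
            · exact Or.inr ⟨hd1, hd2, d'', List.mem_cons_of_mem _ hd3, hd4⟩

-- a vertex with small degree not in X is not in the image of a CenterCond immersion
lemma vmap_ne {H : Multigraph} {X : Set G.V} (I : WeakImmersion H G)
    (hC : CenterCond G X H I) {v : G.V} (hv : v ∉ X) (hdeg : G.degree v ≤ 2)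
    (x : H.V) : I.vmap x ≠ v := by
  intro hx
  have hdx : ¬ H.degree x ≤ 2 := fun h => hv (hx ▸ hC.2 x h)
  -- build an injection from edges at x to edges at v
  have key : ∀ f : H.E, x ∈ H.ends f → ∃ e ∈ I.pedges f, v ∈ G.ends e := by
    intro f hf
    obtain ⟨a, b, hab, hpath⟩ := I.is_path f
    have hne : a ≠ b := by
      intro h; exact H.no_loops f (by rw [hab, h, Sym2.mk_isDiag_iff])
    have hvne : I.vmap a ≠ I.vmap b := fun h => hne (I.vmap_inj h)
    have hlen := hpath.two_le_length hvne
    have hvmem : v ∈ I.pverts f := by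
      rw [hab, Sym2.mem_iff] at hf
      obtain ⟨hw, -, hhd, hlast⟩ := hpath
      rcases hf with rfl | rfl
      · rw [← hx]; exact List.mem_of_mem_head? hhd
      · rw [← hx]; exact List.mem_of_mem_getLast? hlast
    exact hpath.1.exists_incident hvmem hlen
  classical
  have hinj : Function.Injective (fun f : {f : H.E // x ∈ H.ends f} =>
      (⟨(key f.1 f.2).choose, (key f.1 f.2).choose_spec.2⟩ : {e : G.E // v ∈ G.ends e})) := by
    intro f g hfg
    by_contra hne
    have hne' : f.1 ≠ g.1 := fun h => hne (Subtype.ext h)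
    have h1 := (key f.1 f.2).choose_spec.1
    have h2 := (key g.1 g.2).choose_spec.1
    have := I.edge_disjoint f.1 g.1 hne' _ h1
    rw [Subtype.mk.injEq] at hfg
    exact this (hfg ▸ h2)
  have := Nat.card_le_card_of_injective _ hinj
  simp only [degree] at hdx hdeg
  omega

lemma isPathBetween_edges_nodup {a b : G.V} {vs : List G.V} {es : List G.E}
    (h : G.IsPathBetween a b vs es) : es.Nodup := h.1.edges_nodup h.2.1

lemma push_immersion {A B : MarkedGraph} (h : SuppressStep A B) {H : Multigraph}
    (I : WeakImmersion H A.G) (hC : CenterCond A.G A.X H I) :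
    ∃ I' : WeakImmersion H B.G, CenterCond B.G B.X H I' := by
  classical
  obtain ⟨v, hvX, hdeg, σ, hσ, hsurj, hX', hA', τ, hτ⟩ := h
  have hA : ∀ e, v ∈ A.G.ends e → ∃ a, a ≠ v ∧ σ v = σ a ∧ ∃ e₀, A.G.ends e₀ = s(v, a) := by
    intro e he
    obtain ⟨a, h1, ⟨e₀, h2⟩, h3⟩ := hA' (one_le_degree he)
    exact ⟨a, h1, h3, e₀, h2⟩
  have hvne := vmap_ne I hC hvX hdeg
  have hdata : ∀ f : H.E, ∃ es',
      B.G.IsWalk (((I.pverts f).filter (fun x => x ≠ v)).map σ) es' ∧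
      ∀ e' ∈ es', (τ.symm e').1 ∈ I.pedges f := by
    intro f
    obtain ⟨a, b, hab, hpath⟩ := I.is_path f
    refine push_walk v σ hσ hdeg hA τ hτ (I.pverts f).length _ _ le_rfl hpath.1 hpath.2.1 ?_ ?_
    · rw [hpath.2.2.1]
      intro hcon
      exact hvne a (by simpa using hcon)
    · rw [hpath.2.2.2]
      intro hcon
      exact hvne b (by simpa using hcon)
  refine ⟨⟨σ ∘ I.vmap, ?_,
    fun f => ((I.pverts f).filter (fun x => x ≠ v)).map σ,
    fun f => (hdata f).choose, ?_, ?_⟩, ?_, ?_⟩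
  · intro x y hxy
    exact I.vmap_inj ((hσ _ _ (hvne x) (hvne y)).1 hxy)
  · intro f
    obtain ⟨a, b, hab, hpath⟩ := I.is_path f
    refine ⟨a, b, hab, (hdata f).choose_spec.1, ?_, ?_, ?_⟩
    · exact nodup_map_filter σ v hσ hpath.2.1
    · exact head?_map_filter σ v hpath.2.2.1 (hvne a)
    · exact getLast?_map_filter σ v hpath.2.2.2 (hvne b)
  · intro f f' hne e' he' hcon
    have h1 := (hdata f).choose_spec.2 e' he'
    have h2 := (hdata f').choose_spec.2 e' hcon
    exact I.edge_disjoint f f' hne _ h1 h2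
  · intro y hy
    rw [hX'] at hy
    obtain ⟨x, hx, rfl⟩ := hy
    obtain ⟨c, hc⟩ := hC.1 hx
    exact ⟨c, by simp [← hc]⟩
  · intro x hx
    rw [hX']
    exact ⟨I.vmap x, hC.2 x hx, rfl⟩

lemma lift_immersion {A B : MarkedGraph} (h : SuppressStep A B) {C : Multigraph}
    (I : WeakImmersion C B.G) (hC : CenterCond B.G B.X C I) :
    ∃ J : WeakImmersion C A.G, CenterCond A.G A.X C J := by
  classical
  obtain ⟨v, hvX, hdeg, σ, hσ, hsurj, hX', hA', τ, hτ⟩ := h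
  have hA : ∀ e, v ∈ A.G.ends e → ∃ a, a ≠ v ∧ σ v = σ a ∧ ∃ e₀, A.G.ends e₀ = s(v, a) := by
    intro e he
    obtain ⟨a, h1, ⟨e₀, h2⟩, h3⟩ := hA' (one_le_degree he)
    exact ⟨a, h1, h3, e₀, h2⟩
  set ρ : B.G.V → A.G.V := fun y => (hsurj y).choose with hρdef
  have hρv : ∀ y, ρ y ≠ v := fun y => (hsurj y).choose_spec.1
  have hρ : ∀ y, σ (ρ y) = y := fun y => (hsurj y).choose_spec.2
  have hρσ : ∀ x, x ≠ v → ρ (σ x) = x := by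
    intro x hx
    exact (hσ _ _ (hρv _) hx).1 (hρ (σ x))
  have hdata : ∀ f : C.E, ∃ vs es, A.G.IsWalk vs es ∧ vs.Nodup ∧
      (∀ b, (I.pverts f).head? = some b → vs.head? = some (ρ b)) ∧
      (∀ b, (I.pverts f).getLast? = some b → vs.getLast? = some (ρ b)) ∧
      (v ∈ vs → ∃ e'' ∈ I.pedges f, v ∈ A.G.ends (τ.symm e'').1) ∧
      (∀ w ∈ vs, w = v ∨ ∃ u ∈ I.pverts f, w = ρ u) ∧
      (∀ e ∈ es, (∃ e'' ∈ I.pedges f, e = (τ.symm e'').1) ∨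
        ((Sym2.map σ (A.G.ends e)).IsDiag ∧ v ∈ A.G.ends e ∧
          ∃ e'' ∈ I.pedges f, v ∈ A.G.ends (τ.symm e'').1)) := by
    intro f
    obtain ⟨a, b, hab, hpath⟩ := I.is_path f
    exact lift_walk v σ hσ ρ hρv hρ hdeg hA τ hτ (I.pverts f) (I.pedges f)
      hpath.1 hpath.2.1 (isPathBetween_edges_nodup hpath)
  refine ⟨⟨ρ ∘ I.vmap, ?_,
    fun f => (hdata f).choose,
    fun f => (hdata f).choose_spec.choose, ?_, ?_⟩, ?_, ?_⟩
  · intro x y hxy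
    refine I.vmap_inj ?_
    rw [← hρ (I.vmap x), ← hρ (I.vmap y)]
    simp only [Function.comp_apply] at hxy
    rw [hxy]
  · intro f
    obtain ⟨a, b, hab, hpath⟩ := I.is_path f
    obtain ⟨hw, hnd, hhd, hlast, -, -, -⟩ := (hdata f).choose_spec.choose_spec
    exact ⟨a, b, hab, hw, hnd, hhd _ hpath.2.2.1, hlast _ hpath.2.2.2⟩
  · intro f g hne e he hcon
    obtain ⟨-, -, -, -, -, -, hedgef⟩ := (hdata f).choose_spec.choose_spec
    obtain ⟨-, -, -, -, -, -, hedgeg⟩ := (hdata g).choose_spec.choose_spec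
    rcases hedgef e he with ⟨e'', he'', rfl⟩ | ⟨hd1, hd2, e'', he'', hd4⟩
    · rcases hedgeg _ hcon with ⟨d'', hd'', heq⟩ | ⟨hd1, hd2, d'', hd'', hd4⟩
      · have : e'' = d'' := τ.symm.injective (Subtype.ext heq)
        exact I.edge_disjoint f g hne e'' he'' (this ▸ hd'')
      · exact (τ.symm e'').2 hd1
    · rcases hedgeg _ hcon with ⟨d'', hd'', heq⟩ | ⟨hd1', hd2', d'', hd'', hd4'⟩
      · exact (τ.symm d'').2 (heq ▸ hd1)
      · have hval : (τ.symm e'').1 ≠ (τ.symm d'').1 := by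
          intro hv2
          have : e'' = d'' := τ.symm.injective (Subtype.ext hv2)
          exact I.edge_disjoint f g hne e'' he'' (this ▸ hd'')
        have h1 : e ≠ (τ.symm e'').1 := by
          intro hv2
          exact (τ.symm e'').2 (hv2 ▸ hd1)
        have h2 : e ≠ (τ.symm d'').1 := by
          intro hv2
          exact (τ.symm d'').2 (hv2 ▸ hd1)
        have := three_le_degree hd4 hd4' hd2 hval (Ne.symm h1) (Ne.symm h2)
        omega
  · intro x hx
    have hxv : x ≠ v := fun h => hvX (h ▸ hx)
    have : σ x ∈ B.X := by rw [hX']; exact ⟨x, hx, rfl⟩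
    obtain ⟨c, hc⟩ := hC.1 this
    refine ⟨c, ?_⟩
    simp only [Function.comp_apply, hc]
    exact hρσ x hxv
  · intro c hc
    have := hC.2 c hc
    rw [hX'] at this
    obtain ⟨x, hx, hσx⟩ := this
    have hxv : x ≠ v := fun h => hvX (h ▸ hx)
    simp only [Function.comp_apply, ← hσx, hρσ x hxv]
    exact hx

lemma threeCenter_of_suppressStep {A B : MarkedGraph} (h : SuppressStep A B) {C : Multigraph}
    (hC : IsThreeCenter B.G B.X C) : IsThreeCenter A.G A.X C := by
  constructor
  · obtain ⟨I, hI⟩ := hC.1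
    exact lift_immersion h I hI
  · rintro H ⟨I, hI⟩
    obtain ⟨I', hI'⟩ := push_immersion h I hI
    exact hC.2 H ⟨I', hI'⟩

lemma isThreeCenter_self (G : Multigraph) (X : Set G.V) (h : ∀ v, v ∉ X → 2 < G.degree v) :
    IsThreeCenter G X G := by
  classical
  constructor
  · refine ⟨⟨id, fun a b hab => hab,
      fun f => [(exists_ends G f).choose, (exists_ends G f).choose_spec.choose],
      fun f => [f], ?_, ?_⟩, ?_, ?_⟩
    · intro f
      obtain ⟨hxy, hne⟩ := (exists_ends G f).choose_spec.choose_spec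
      exact ⟨_, _, hxy, IsWalk.cons _ f hxy (IsWalk.nil _), by simp [hne], rfl, rfl⟩
    · intro f f' hne e he hcon
      simp only [List.mem_singleton] at he hcon
      exact hne (he ▸ hcon ▸ rfl)
    · intro x hx
      exact ⟨x, rfl⟩
    · intro x hx
      by_contra hxX
      exact absurd hx (not_le.2 (h x hxX))
  · rintro H ⟨I, -⟩
    exact ⟨I⟩

lemma pedges_ne_nil {H G : Multigraph} (I : WeakImmersion H G) (f : H.E) :
    I.pedges f ≠ [] := by
  obtain ⟨a, b, hab, hpath⟩ := I.is_path f
  have hne : a ≠ b := fun hh => H.no_loops f (by rw [hab, hh, Sym2.mk_isDiag_iff])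
  have hvne : I.vmap a ≠ I.vmap b := fun hh => hne (I.vmap_inj hh)
  have h2 := hpath.two_le_length hvne
  intro hnil
  have hw := hpath.1
  rw [hnil] at hw
  have hkey : ∀ vs : List G.V, G.IsWalk vs [] → vs.length = 1 := by
    intro vs hvs; cases hvs; simp
  have := hkey _ hw
  omega

lemma walk_single {vs : List G.V} {e : G.E} (hw : G.IsWalk vs [e]) :
    ∃ u w, vs = [u, w] ∧ G.ends e = s(u, w) := by
  cases hw with
  | cons u e he hw' => cases hw' with | nil w => exact ⟨u, _, rfl, he⟩

lemma immersion_card_E {H G : Multigraph} (K : WeakImmersion H G) :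
    Nat.card H.E ≤ Nat.card G.E := by
  set φ : H.E → G.E := fun f => (K.pedges f).head (pedges_ne_nil K f) with hφ
  have hφmem : ∀ f, φ f ∈ K.pedges f := fun f => List.head_mem _
  have hinj : Function.Injective φ := by
    intro f g hfg
    by_contra hne
    have h1 := hφmem f
    rw [hfg] at h1
    exact K.edge_disjoint f g hne _ h1 (hφmem g)
  exact Nat.card_le_card_of_injective _ hinj

lemma iso_of_mutual {C C' : Multigraph} (I : WeakImmersion C C') (J : WeakImmersion C' C) :
    Nonempty (Iso C C') := by
  classical
  haveI : Fintype C.E := Fintype.ofFinite _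
  haveI : Fintype C'.E := Fintype.ofFinite _
  have cardV : Nat.card C.V = Nat.card C'.V :=
    le_antisymm (Nat.card_le_card_of_injective _ I.vmap_inj)
      (Nat.card_le_card_of_injective _ J.vmap_inj)
  have cardE : Nat.card C.E = Nat.card C'.E :=
    le_antisymm (immersion_card_E I) (immersion_card_E J)
  set S : C.E → Finset C'.E := fun f => (I.pedges f).toFinset with hS
  have hdisj : ∀ f g : C.E, f ≠ g → Disjoint (S f) (S g) := by
    intro f g hne
    rw [Finset.disjoint_left]
    intro e hef heg
    simp only [hS, List.mem_toFinset] at hef heg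
    exact I.edge_disjoint f g hne e hef heg
  have hcard1 : ∀ f, 1 ≤ (S f).card := by
    intro f
    rw [Nat.one_le_iff_ne_zero, ← Nat.pos_iff_ne_zero, Finset.card_pos]
    exact ⟨(I.pedges f).head (pedges_ne_nil I f), by
      simp only [hS, List.mem_toFinset]; exact List.head_mem _⟩
  have hsum : ∑ f : C.E, (S f).card = (Finset.univ.biUnion S).card :=
    (Finset.card_biUnion (fun f _ g _ hfg => hdisj f g hfg)).symm
  have hle : (Finset.univ.biUnion S).card ≤ Fintype.card C'.E := Finset.card_le_univ _
  have hge : Fintype.card C.E ≤ ∑ f : C.E, (S f).card := by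
    calc Fintype.card C.E = ∑ _f : C.E, 1 := by simp
    _ ≤ _ := Finset.sum_le_sum (fun f _ => hcard1 f)
  have hEE : Fintype.card C.E = Fintype.card C'.E := by
    rw [← Nat.card_eq_fintype_card, ← Nat.card_eq_fintype_card]; exact cardE
  have hsum_eq : ∑ f : C.E, (S f).card = Fintype.card C.E := by omega
  have hone : ∀ f, (S f).card = 1 := by
    intro f
    by_contra hne
    have h2 : 2 ≤ (S f).card := by have := hcard1 f; omega
    have hsplit : (S f).card + ∑ g ∈ Finset.univ.erase f, (S g).card
        = ∑ g : C.E, (S g).card :=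
      Finset.add_sum_erase Finset.univ (fun g => (S g).card) (Finset.mem_univ f)
    have h3 : (Finset.univ.erase f).card ≤ ∑ g ∈ Finset.univ.erase f, (S g).card := by
      calc (Finset.univ.erase f).card = ∑ _g ∈ Finset.univ.erase f, 1 := by simp
      _ ≤ _ := Finset.sum_le_sum (fun g _ => hcard1 g)
    have h4 : (Finset.univ.erase f).card = Fintype.card C.E - 1 := by
      rw [Finset.card_erase_of_mem (Finset.mem_univ f), Finset.card_univ]
    have h5 : 1 ≤ Fintype.card C.E := by
      have : 0 < Fintype.card C.E := Fintype.card_pos_iff.2 ⟨f⟩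
      omega
    omega
  have hunion : Finset.univ.biUnion S = Finset.univ := by
    refine Finset.eq_univ_of_card _ ?_
    omega
  have hsingle : ∀ f : C.E, ∃ e, I.pedges f = [e] := by
    intro f
    have hnd : (I.pedges f).Nodup := by
      obtain ⟨a, b, hab, hp⟩ := I.is_path f
      exact isPathBetween_edges_nodup hp
    have hlen : (I.pedges f).length = 1 := by
      rw [← List.toFinset_card_of_nodup hnd]
      exact hone f
    rcases hL : I.pedges f with _ | ⟨e, _ | ⟨e2, t⟩⟩
    · rw [hL] at hlen; simp at hlen
    · exact ⟨e, rfl⟩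
    · rw [hL] at hlen; simp at hlen
  set ψ : C.E → C'.E := fun f => (hsingle f).choose with hψ
  have hmem_single : ∀ f : C.E, ψ f ∈ I.pedges f := by
    intro f
    have hc := (hsingle f).choose_spec
    have h0 : ψ f ∈ [ψ f] := List.mem_singleton_self _
    simp only [hψ] at h0
    rwa [← hc] at h0
  have hemap_inj : Function.Injective ψ := by
    intro f g hfg
    by_contra hne
    have h1 := hmem_single f
    rw [hfg] at h1
    exact I.edge_disjoint f g hne _ h1 (hmem_single g)
  have hemap_surj : Function.Surjective ψ := by
    intro e
    have hmem : e ∈ Finset.univ.biUnion S := hunion ▸ Finset.mem_univ e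
    rw [Finset.mem_biUnion] at hmem
    obtain ⟨f, -, hef⟩ := hmem
    simp only [hS, List.mem_toFinset] at hef
    rw [(hsingle f).choose_spec] at hef
    exact ⟨f, ((List.mem_singleton.1 hef).symm : _)⟩
  refine ⟨⟨Equiv.ofBijective _ ((Nat.bijective_iff_injective_and_card _).2 ⟨I.vmap_inj, cardV⟩),
    Equiv.ofBijective ψ ⟨hemap_inj, hemap_surj⟩, ?_⟩⟩
  intro f
  simp only [Equiv.ofBijective_apply]
  obtain ⟨x, y, hxy, hpath⟩ := I.is_path f
  obtain ⟨u, w, hvs, hends⟩ := walk_single ((hsingle f).choose_spec ▸ hpath.1)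
  have hu : u = I.vmap x := by
    have h := hpath.2.2.1
    rw [hvs] at h
    simpa using h
  have hw : w = I.vmap y := by
    have h := hpath.2.2.2
    rw [hvs] at h
    simpa using h
  have hψf : C'.ends (ψ f) = s(u, w) := by
    simp only [hψ]
    exact hends
  change C'.ends (ψ f) = _
  rw [hψf, hxy, Sym2.map_pair_eq, hu, hw]

lemma exists_suppressStep (A : MarkedGraph) (v : A.G.V) (hv : v ∉ A.X)
    (hdeg : A.G.degree v ≤ 2) (x₀ : A.G.V) (hx₀ : x₀ ≠ v) :
    ∃ B : MarkedGraph, SuppressStep A B ∧ Nat.card B.G.V + 1 = Nat.card A.G.V := by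
  classical
  have htarget : ∃ t : {x : A.G.V // x ≠ v}, 1 ≤ A.G.degree v →
      ∃ a, a ≠ v ∧ (∃ e, A.G.ends e = s(v, a)) ∧ (t : A.G.V) = a := by
    by_cases h1 : 1 ≤ A.G.degree v
    · have hne : Nonempty {e : A.G.E // v ∈ A.G.ends e} := by
        rw [degree] at h1
        exact (Nat.card_pos_iff.1 h1).1
      obtain ⟨e, he⟩ := hne
      obtain ⟨a, hav, hea⟩ := exists_other he
      exact ⟨⟨a, hav⟩, fun _ => ⟨a, hav, ⟨e, hea⟩, rfl⟩⟩
    · exact ⟨⟨x₀, hx₀⟩, fun h => absurd h h1⟩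
  obtain ⟨t, ht⟩ := htarget
  set σ : A.G.V → {x : A.G.V // x ≠ v} := fun x => if h : x = v then t else ⟨x, h⟩ with hσdef
  have hσ : ∀ x y, x ≠ v → y ≠ v → (σ x = σ y ↔ x = y) := by
    intro x y hx hy
    simp only [hσdef, dif_neg hx, dif_neg hy, Subtype.mk.injEq]
  refine ⟨⟨⟨{x : A.G.V // x ≠ v}, {e : A.G.E // ¬ (Sym2.map σ (A.G.ends e)).IsDiag},
    inferInstance, inferInstance, fun e => Sym2.map σ (A.G.ends e.1), fun e => e.2⟩,
    {y | ∃ x, x ∈ A.X ∧ σ x = y}⟩,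
    ⟨v, hv, hdeg, σ, hσ, ?_, rfl, ?_, Equiv.refl _, fun e => rfl⟩, ?_⟩
  · intro y
    refine ⟨y.1, y.2, ?_⟩
    simp only [hσdef, dif_neg y.2]
  · intro h1
    obtain ⟨a, hav, hex, hta⟩ := ht h1
    refine ⟨a, hav, hex, ?_⟩
    show (if h : v = v then t else ⟨v, h⟩) = (if h : a = v then t else ⟨a, h⟩)
    rw [dif_pos rfl, dif_neg hav]
    exact Subtype.ext hta
  · haveI : Fintype A.G.V := Fintype.ofFinite _
    show Nat.card {x : A.G.V // x ≠ v} + 1 = Nat.card A.G.V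
    simp only [Nat.card_eq_fintype_card]
    rw [Fintype.card_subtype_compl, Fintype.card_subtype_eq]
    have : 0 < Fintype.card A.G.V := Fintype.card_pos_iff.2 ⟨v⟩
    omega

def emptyMG : Multigraph :=
  ⟨PEmpty, PEmpty, inferInstance, inferInstance, fun e => e.elim, fun e => e.elim⟩

lemma degenerate_center (A : MarkedGraph) (v : A.G.V) (hv : v ∉ A.X)
    (hall : ∀ x : A.G.V, x = v) : ∃ C, IsThreeCenter A.G A.X C := by
  have hXempty : ∀ x, x ∉ A.X := by
    intro x hx
    exact hv ((hall x) ▸ hx)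
  refine ⟨emptyMG, ⟨⟨fun c => c.elim, fun {a} => a.elim, fun f => f.elim, fun f => f.elim,
    fun f => f.elim, fun f => f.elim⟩, fun x hx => absurd hx (hXempty x), fun x => x.elim⟩, ?_⟩
  rintro H ⟨I, hcond⟩
  have hHE : IsEmpty H.E := by
    refine ⟨fun f => ?_⟩
    obtain ⟨x, y, hxy, hp⟩ := I.is_path f
    have hxy' : x = y := I.vmap_inj ((hall _).trans (hall _).symm)
    exact H.no_loops f (by rw [hxy, hxy', Sym2.mk_isDiag_iff])
  have hHV : IsEmpty H.V := by
    refine ⟨fun x => ?_⟩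
    have hd : H.degree x = 0 := by
      rw [degree]
      exact Nat.card_of_isEmpty
    exact hXempty _ (hcond.2 x (by rw [hd]; omega))
  exact ⟨⟨fun x => (hHV.false x).elim, fun {a} => (hHV.false a).elim,
    fun f => (hHE.false f).elim, fun f => (hHE.false f).elim,
    fun f => (hHE.false f).elim, fun f => (hHE.false f).elim⟩⟩

lemma exists_threeCenter : ∀ (n : ℕ) (A : MarkedGraph), Nat.card A.G.V ≤ n →
    ∃ C, IsThreeCenter A.G A.X C := by
  intro n
  induction n with
  | zero =>
    intro A hA
    refine ⟨A.G, isThreeCenter_self _ _ ?_⟩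
    intro v
    have hemp : IsEmpty A.G.V := by
      rw [Nat.le_zero] at hA
      rcases Nat.card_eq_zero.1 hA with h | h
      · exact h
      · exact absurd A.G.finV h.not_finite
    exact (hemp.false v).elim
  | succ n ih =>
    intro A hA
    by_cases hall : ∀ v, v ∉ A.X → 2 < A.G.degree v
    · exact ⟨A.G, isThreeCenter_self _ _ hall⟩
    · push_neg at hall
      obtain ⟨v, hvX, hdeg⟩ := hall
      by_cases hex : ∃ x : A.G.V, x ≠ v
      · obtain ⟨x₀, hx₀⟩ := hex
        obtain ⟨B, hstep, hcard⟩ := exists_suppressStep A v hvX hdeg x₀ hx₀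
        obtain ⟨C, hC⟩ := ih B (by omega)
        exact ⟨C, threeCenter_of_suppressStep hstep hC⟩
      · push_neg at hex
        exact degenerate_center A v hvX hex

lemma threeCenter_of_chain {A M : MarkedGraph} (h : Relation.ReflTransGen SuppressStep A M)
    {C : Multigraph} (hC : IsThreeCenter M.G M.X C) : IsThreeCenter A.G A.X C := by
  induction h using Relation.ReflTransGen.head_induction_on with
  | refl => exact hC
  | head hstep _ ih => exact threeCenter_of_suppressStep hstep ih

end ThreeCenterProof

end Multigraph

open Multigraph in
/-- the 3-center of `(G, X)` exists, is unique up to isomorphism, and is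
the graph obtained from `G` by repeatedly suppressing vertices outside `X` of degree
at most two. -/
theorem threeCenter_exists_unique (G : Multigraph) (X : Set G.V) :
    (∃ C : Multigraph, IsThreeCenter G X C) ∧
    (∀ C C' : Multigraph, IsThreeCenter G X C → IsThreeCenter G X C' →
      Nonempty (Iso C C')) ∧
    (∀ M : MarkedGraph, Relation.ReflTransGen SuppressStep ⟨G, X⟩ M →
      (∀ v : M.G.V, v ∉ M.X → 2 < M.G.degree v) → IsThreeCenter G X M.G) := by
  refine ⟨?_, ?_, ?_⟩
  · exact exists_threeCenter (Nat.card G.V) ⟨G, X⟩ le_rfl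
  · intro C C' hC hC'
    obtain ⟨I⟩ := hC'.2 C hC.1
    obtain ⟨J⟩ := hC.2 C' hC'.1
    exact iso_of_mutual I J
  · intro M hreach hall
    exact threeCenter_of_chain hreach (isThreeCenter_self M.G M.X hall)
end

section
/- Let G be a graph with maximum degree at most d and tree-width at most w. Then G has a tree-cut decomposition of adhesion at most (2w+2)d such that every torso has at most (d+1)(w+1) vertices; in particular, the tree-cut width of G is at most (2w+2)d. -/
open Sym2

namespace TCWaux
open SimpleGraph

variable {V : Type}

open SimpleGraph

variable {V : Type}


variable {V : Type}

/-- The simple graph determined by a parent function. -/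
def pgraph (f : V → V) : SimpleGraph V where
  Adj a b := a ≠ b ∧ (f a = b ∨ f b = a)
  symm := ⟨by rintro a b ⟨h1, h2⟩; exact ⟨h1.symm, h2.symm⟩⟩
  loopless := ⟨by rintro a ⟨h1, _⟩; exact h1 rfl⟩

/-- `b` is a descendant of `a` (or equal). -/
def desc (f : V → V) (a b : V) : Prop := ∃ k, f^[k] b = a

structure PData (f : V → V) (r : V) (rk : V → ℕ) : Prop where
  root : f r = r
  dec : ∀ a, a ≠ r → rk (f a) < rk a

namespace PData

variable {f : V → V} {r : V} {rk : V → ℕ} (h : PData f r rk)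
include h

lemma f_ne (a : V) (ha : a ≠ r) : f a ≠ a := fun he => absurd (he ▸ h.dec a ha) (lt_irrefl _)

lemma desc_refl (a : V) : desc f a a := ⟨0, rfl⟩

lemma desc_step {a b : V} (hd : desc f a (f b)) : desc f a b := by
  obtain ⟨k, hk⟩ := hd
  exact ⟨k + 1, by rwa [Function.iterate_succ_apply]⟩

lemma desc_cases {a b : V} (hd : desc f a b) : b = a ∨ desc f a (f b) := by
  obtain ⟨k, hk⟩ := hd
  cases k with
  | zero => exact Or.inl hk
  | succ n => exact Or.inr ⟨n, by rwa [Function.iterate_succ_apply] at hk⟩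

lemma desc_trans {a b c : V} (h1 : desc f a b) (h2 : desc f b c) : desc f a c := by
  obtain ⟨k, hk⟩ := h1; obtain ⟨m, hm⟩ := h2
  exact ⟨k + m, by rw [Function.iterate_add_apply, hm, hk]⟩

lemma rk_f_le (a : V) : rk (f a) ≤ rk a := by
  by_cases ha : a = r
  · rw [ha, h.root]
  · exact (h.dec a ha).le

lemma rk_iterate_le (k : ℕ) (a : V) : rk (f^[k] a) ≤ rk a := by
  induction k with
  | zero => rfl
  | succ n ih =>
      rw [Function.iterate_succ_apply']
      exact (h.rk_f_le _).trans ih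

lemma rk_le_of_desc {a b : V} (hd : desc f a b) : rk a ≤ rk b := by
  obtain ⟨k, hk⟩ := hd; exact hk ▸ h.rk_iterate_le k b

lemma not_desc_f_self {a : V} (ha : a ≠ r) : ¬ desc f a (f a) := fun hd =>
  absurd (h.rk_le_of_desc hd) (not_le.2 (h.dec a ha))

lemma desc_root_iff {a : V} : desc f a r ↔ a = r := by
  constructor
  · rintro ⟨k, hk⟩
    rw [Function.iterate_fixed h.root] at hk
    exact hk.symm
  · rintro rfl; exact ⟨0, rfl⟩

lemma reachable_root (a : V) : (pgraph f).Reachable a r := by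
  generalize hn : rk a = n
  induction n using Nat.strong_induction_on generalizing a with
  | _ n ih =>
    by_cases ha : a = r
    · exact ha ▸ SimpleGraph.Reachable.refl a
    · have hadj : (pgraph f).Adj a (f a) := ⟨(h.f_ne a ha).symm, Or.inl rfl⟩
      exact hadj.reachable.trans (ih (rk (f a)) (hn ▸ h.dec a ha) (f a) rfl)

lemma connected [Nonempty V] : (pgraph f).Connected := by
  refine ⟨fun a b => (h.reachable_root a).trans (h.reachable_root b).symm⟩

/-- Crossing a descendant set requires visiting its top. -/
lemma mem_support_of_desc {G : SimpleGraph V}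
    (hG : ∀ a b, G.Adj a b → f a = b ∨ f b = a) {b c : V} (W : G.Walk b c)
    (a : V) (hb : desc f a b) (hc : ¬ desc f a c) : a ∈ W.support := by
  induction W with
  | nil => exact absurd hb hc
  | @cons u v w hadj p ih =>
      by_cases hv : desc f a v
      · simp [ih hv hc]
      · rcases hG _ _ hadj with he | he
        · rcases h.desc_cases hb with rfl | hd
          · simp
          · exact absurd (he ▸ hd) hv
        · exact absurd (h.desc_step (he ▸ hb)) hv

lemma reachable_del_iff {a : V} (ha : a ≠ r)
    {b c : V} :
    ((pgraph f).deleteEdges {s(a, f a)}).Reachable b c ↔ (desc f a b ↔ desc f a c) := by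
  have hstep : ∀ x y : V, ((pgraph f).deleteEdges {s(a, f a)}).Adj x y →
      (desc f a x ↔ desc f a y) := by
    intro x y hxy
    rw [SimpleGraph.deleteEdges_adj] at hxy
    obtain ⟨⟨hne, hor⟩, hns⟩ := hxy
    simp only [Set.mem_singleton_iff] at hns
    rcases hor with he | he
    · constructor
      · intro hd
        rcases h.desc_cases hd with rfl | hd'
        · exact absurd (he ▸ rfl) hns
        · exact he ▸ hd'
      · intro hd; exact h.desc_step (he ▸ hd)
    · constructor
      · intro hd; exact h.desc_step (he ▸ hd)
      · intro hd
        rcases h.desc_cases hd with rfl | hd'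
        · exact absurd (by rw [he]; exact Sym2.eq_swap) hns
        · exact he ▸ hd'
  constructor
  · rintro ⟨W⟩
    induction W with
    | nil => rfl
    | cons hadj p ih => exact (hstep _ _ hadj).trans ih
  · -- both descendants: reach a; both not: reach r
    have key1 : ∀ x, desc f a x → ((pgraph f).deleteEdges {s(a, f a)}).Reachable x a := by
      intro x hx
      generalize hn : rk x = n
      induction n using Nat.strong_induction_on generalizing x with
      | _ n ih =>
        rcases h.desc_cases hx with rfl | hd
        · rfl
        · have hxr : x ≠ r := by
            rintro rfl
            exact ha (h.desc_root_iff.1 hx)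
          have hfx : f x ≠ x := h.f_ne x hxr
          have hadj : ((pgraph f).deleteEdges {s(a, f a)}).Adj x (f x) := by
            rw [SimpleGraph.deleteEdges_adj]
            refine ⟨⟨hfx.symm, Or.inl rfl⟩, ?_⟩
            simp only [Set.mem_singleton_iff, Sym2.eq_iff]
            rintro (⟨rfl, -⟩ | ⟨hx1, hx2⟩)
            · exact h.not_desc_f_self hxr hd
            · have h1 : rk (f x) < rk x := h.dec x hxr
              have h2 : rk (f a) ≤ rk a := h.rk_f_le a
              rw [← hx1] at h2
              rw [hx2] at h1
              omega
          exact hadj.reachable.trans (ih (rk (f x)) (hn ▸ h.dec x hxr) (f x) hd rfl)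
    have key2 : ∀ x, ¬ desc f a x → ((pgraph f).deleteEdges {s(a, f a)}).Reachable x r := by
      intro x hx
      generalize hn : rk x = n
      induction n using Nat.strong_induction_on generalizing x with
      | _ n ih =>
        by_cases hxr : x = r
        · rw [hxr]
        · have hfx : f x ≠ x := h.f_ne x hxr
          have hadj : ((pgraph f).deleteEdges {s(a, f a)}).Adj x (f x) := by
            rw [SimpleGraph.deleteEdges_adj]
            refine ⟨⟨hfx.symm, Or.inl rfl⟩, ?_⟩
            simp only [Set.mem_singleton_iff, Sym2.eq_iff]
            rintro (⟨rfl, -⟩ | ⟨hx1, hx2⟩)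
            · exact hx (h.desc_refl _)
            · exact hx ⟨1, by simpa using hx2⟩
          have hnfx : ¬ desc f a (f x) := fun hd => hx (h.desc_step hd)
          exact hadj.reachable.trans (ih (rk (f x)) (hn ▸ h.dec x hxr) (f x) hnfx rfl)
    intro hiff
    by_cases hb : desc f a b
    · exact (key1 b hb).trans (key1 c (hiff.1 hb)).symm
    · exact (key2 b hb).trans (key2 c (fun hc => hb (hiff.2 hc))).symm

lemma isTree [Nonempty V] : (pgraph f).IsTree := by
  refine ⟨h.connected, ?_⟩
  rw [SimpleGraph.isAcyclic_iff_forall_edge_isBridge]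
  rintro e he
  induction e with
  | _ x y =>
    rw [SimpleGraph.mem_edgeSet] at he
    obtain ⟨hne, hor⟩ := he
    have main : ∀ a : V, a ≠ r → (pgraph f).IsBridge s(a, f a) := by
      intro a har
      rw [SimpleGraph.isBridge_iff]
      have hfa : f a ≠ a := h.f_ne a har
      intro hre
      have : ((pgraph f).deleteEdges {s(a, f a)}).Reachable a (f a) := hre
      rw [h.reachable_del_iff har] at this
      exact h.not_desc_f_self har (this.1 (h.desc_refl a))
    rcases hor with he | he
    · have har : x ≠ r := by rintro rfl; exact hne (by rw [← h.root]; exact he)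
      exact he ▸ main x har
    · have har : y ≠ r := by rintro rfl; exact hne (by rw [← h.root]; exact he.symm)
      have := main y har
      rwa [he, Sym2.eq_swap] at this

end PData


lemma exists_parent (S : SimpleGraph V) (hS : S.IsTree) (r : V) :
    ∃ p : V → V, p r = r ∧ (∀ t, t ≠ r → S.dist (p t) r + 1 = S.dist t r) ∧
      (∀ a b, S.Adj a b ↔ a ≠ b ∧ (p a = b ∨ p b = a)) := by
  classical
  have huniq : ∀ {a : V} (P Q : S.Walk a r), P.IsPath → Q.IsPath → P = Q := by
    intro a P Q hP hQ
    have := SimpleGraph.isAcyclic_iff_path_unique.1 hS.IsAcyclic (⟨P, hP⟩ : S.Path a r) ⟨Q, hQ⟩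
    exact congrArg Subtype.val this
  have hstep : ∀ t, t ≠ r → ∃ u, S.Adj t u ∧ S.dist u r + 1 = S.dist t r ∧
      ∃ w : S.Walk u r, w.IsPath ∧ t ∉ w.support := by
    intro t ht
    obtain ⟨w0, hw0⟩ := (hS.isConnected t r).exists_walk_length_eq_dist
    have hbp : w0.bypass.IsPath := w0.bypass_isPath
    have hblen : w0.bypass.length = S.dist t r :=
      le_antisymm (hw0 ▸ w0.length_bypass_le) (SimpleGraph.dist_le _)
    obtain ⟨u, hadj, q, heq⟩ := Walk.exists_eq_cons_of_ne ht w0.bypass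
    rw [heq, Walk.cons_isPath_iff] at hbp
    have hlen : q.length + 1 = S.dist t r := by
      rw [← hblen, heq, Walk.length_cons]
    have hd1 : S.dist u r ≤ q.length := SimpleGraph.dist_le q
    have hd2 : S.dist t r ≤ S.dist u r + 1 := by
      obtain ⟨wu, hwu⟩ := (hS.isConnected u r).exists_walk_length_eq_dist
      have := SimpleGraph.dist_le (Walk.cons hadj wu)
      rwa [Walk.length_cons, hwu] at this
    exact ⟨u, hadj, by omega, q, hbp.1, hbp.2⟩
  set p : V → V := fun t => if h : t = r then r else Classical.choose (hstep t h) with hp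
  have hpr : p r = r := by simp [hp]
  have hspec : ∀ t (ht : t ≠ r), S.Adj t (p t) ∧ S.dist (p t) r + 1 = S.dist t r ∧
      ∃ w : S.Walk (p t) r, w.IsPath ∧ t ∉ w.support := by
    intro t ht
    have hpt : p t = Classical.choose (hstep t ht) := dif_neg ht
    rw [hpt]
    exact Classical.choose_spec (hstep t ht)
  -- p t is the second vertex of any path from t to r
  have hsecond : ∀ t (ht : t ≠ r) (u : V) (hadj : S.Adj t u) (q : S.Walk u r),
      q.IsPath → t ∉ q.support → p t = u := by
    intro t ht u hadj q hq htq
    obtain ⟨hadj₀, -, q₀, hq₀, htq₀⟩ := hspec t ht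
    have hP1 : (Walk.cons hadj₀ q₀).IsPath := by rw [Walk.cons_isPath_iff]; exact ⟨hq₀, htq₀⟩
    have hP2 : (Walk.cons hadj q).IsPath := by rw [Walk.cons_isPath_iff]; exact ⟨hq, htq⟩
    have := huniq _ _ hP1 hP2
    have h1 := congrArg (fun w : S.Walk t r => w.getVert 1) this
    simpa [Walk.getVert_cons_succ, Walk.getVert_zero] using h1
  refine ⟨p, hpr, fun t ht => (hspec t ht).2.1, fun a b => ?_⟩
  constructor
  · intro hadj
    refine ⟨hadj.ne, ?_⟩
    by_cases hpb : p b = a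
    · exact Or.inr hpb
    · left
      by_cases hbr : b = r
      · subst hbr
        exact hsecond a hadj.ne b hadj Walk.nil (by simp) (by simpa using hadj.ne)
      · obtain ⟨hadjb, -, qb, hqb, hbqb⟩ := hspec b hbr
        by_cases haq : a ∈ (Walk.cons hadjb qb).support
        · exfalso
          -- build a cycle
          have haqb : a ∈ qb.support := by
            have h2 := haq
            rw [Walk.support_cons, List.mem_cons] at h2
            rcases h2 with h2 | h2
            · exact absurd h2 hadj.ne
            · exact h2
          have htu : (qb.takeUntil a haqb).IsPath := hqb.takeUntil haqb
          have hbt : b ∉ (qb.takeUntil a haqb).support :=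
            fun h => hbqb (qb.support_takeUntil_subset haqb h)
          have hq' : (Walk.cons hadjb (qb.takeUntil a haqb)).IsPath := by
            rw [Walk.cons_isPath_iff]; exact ⟨htu, hbt⟩
          have hedge : ¬ s(a, b) ∈ (Walk.cons hadjb (qb.takeUntil a haqb)).edges := by
            rw [Walk.edges_cons, List.mem_cons]
            rintro (h2 | h2)
            · rw [Sym2.eq_iff] at h2
              rcases h2 with ⟨h3, -⟩ | ⟨h3, h4⟩
              · exact hadj.ne h3
              · exact hpb h3.symm
            · exact hbt (Walk.fst_mem_support_of_mem_edges _ (Sym2.eq_swap ▸ h2))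
          have hcyc := SimpleGraph.Path.cons_isCycle ⟨_, hq'⟩ hadj hedge
          exact hS.IsAcyclic _ hcyc
        · have har : a ≠ r := by
            rintro rfl
            exact haq (Walk.end_mem_support _)
          have := hsecond a har b hadj (Walk.cons hadjb qb)
            (by rw [Walk.cons_isPath_iff]; exact ⟨hqb, hbqb⟩) haq
          exact this
  · rintro ⟨hne, hor | hor⟩
    · have har : a ≠ r := by rintro rfl; rw [hpr] at hor; exact hne hor
      exact hor ▸ (hspec a har).1
    · have hbr : b ≠ r := by rintro rfl; rw [hpr] at hor; exact hne hor.symm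
      exact ((hor ▸ (hspec b hbr).1) : S.Adj b a).symm

section Gadget
variable {τ : Type} [Finite τ]
variable (p : τ → τ) (r : τ) (ord : τ → ℕ)

def sibset (x : τ) : Set τ := {v | p v = p x ∧ v ≠ p x ∧ ord v < ord x}

noncomputable def psib (x : τ) : Option τ :=
  @dite _ ((sibset p ord x).Nonempty) (Classical.dec _)
    (fun h => some (Set.exists_max_image _ ord (Set.toFinite _) h).choose) (fun _ => none)

lemma psib_some {x v : τ} (h : psib p ord x = some v) :
    v ∈ sibset p ord x ∧ ∀ w ∈ sibset p ord x, ord w ≤ ord v := by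
  by_cases hne : (sibset p ord x).Nonempty
  · rw [psib, dif_pos hne] at h
    obtain ⟨h1, h2⟩ := (Set.exists_max_image _ ord (Set.toFinite _) hne).choose_spec
    obtain rfl : _ = v := Option.some.inj h
    exact ⟨h1, h2⟩
  · rw [psib, dif_neg hne] at h
    cases h

lemma psib_none {x : τ} (h : psib p ord x = none) : sibset p ord x = ∅ := by
  by_cases hne : (sibset p ord x).Nonempty
  · rw [psib, dif_pos hne] at h
    cases h
  · exact Set.not_nonempty_iff_eq_empty.1 hne

open Classical in
/-- The parent function on the caterpillar-gadget tree. -/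
noncomputable def fg : τ ⊕ τ → τ ⊕ τ
  | Sum.inl t => Sum.inr t
  | Sum.inr x =>
      if x = r then Sum.inr r else
        match psib p ord x with
        | some v => Sum.inr v
        | none => Sum.inr (p x)

lemma fg_inl (t : τ) : fg p r ord (Sum.inl t) = Sum.inr t := rfl

lemma fg_inr_root : fg p r ord (Sum.inr r) = Sum.inr r := by simp [fg]

lemma fg_inr_some {x v : τ} (hx : x ≠ r) (h : psib p ord x = some v) :
    fg p r ord (Sum.inr x) = Sum.inr v := by simp [fg, hx, h]

lemma fg_inr_none {x : τ} (hx : x ≠ r) (h : psib p ord x = none) :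
    fg p r ord (Sum.inr x) = Sum.inr (p x) := by simp [fg, hx, h]

lemma fg_is_inr (z : τ ⊕ τ) : ∃ y, fg p r ord z = Sum.inr y := by
  rcases z with t | x
  · exact ⟨t, rfl⟩
  · by_cases hx : x = r
    · exact ⟨r, by rw [hx, fg_inr_root]⟩
    · rcases hs : psib p ord x with _ | v
      · exact ⟨p x, fg_inr_none _ _ _ hx hs⟩
      · exact ⟨v, fg_inr_some _ _ _ hx hs⟩

def Du : τ → Set (τ) := fun u => {z | desc (fg p r ord) (Sum.inr u) (Sum.inr z)}

noncomputable def idx (x : τ) : ℕ := (sibset p ord x).ncard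

noncomputable def rkg (rkτ : τ → ℕ) : τ ⊕ τ → ℕ
  | Sum.inl t => 2 * ((Nat.card τ + 1) * rkτ t + idx p ord t) + 1
  | Sum.inr t => 2 * ((Nat.card τ + 1) * rkτ t + idx p ord t)

variable {p r ord}
variable {rkτ : τ → ℕ}

section
variable (hpr : p r = r) (hpd : ∀ t, t ≠ r → rkτ (p t) + 1 = rkτ t)

include hpd in
lemma p_fix {t : τ} (h : p t = t) : t = r := by
  by_contra ht
  have := hpd t ht
  rw [h] at this
  omega

include hpr hpd in
lemma sib_ne_root {x v : τ} (h : v ∈ sibset p ord x) : v ≠ r := by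
  rintro rfl
  exact h.2.1 (by rw [← h.1, hpr])

lemma idx_lt_C (x : τ) : idx p ord x < Nat.card τ + 1 := by
  have : (sibset p ord x).ncard ≤ Nat.card τ := by
    rw [← Set.ncard_univ]
    exact Set.ncard_le_ncard (Set.subset_univ _) (Set.toFinite _)
  simpa [idx] using Nat.lt_succ_of_le this

include hpr hpd in
lemma pdata_fg : PData (fg p r ord) (Sum.inr r) (rkg p ord rkτ) := by
  constructor
  · exact fg_inr_root p r ord
  · rintro (t | x) ha
    · rw [fg_inl]
      simp only [rkg]
      omega
    · have hxr : x ≠ r := fun h => ha (by rw [h])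
      rcases hs : psib p ord x with _ | v
      · rw [fg_inr_none _ _ _ hxr hs]
        simp only [rkg]
        have h1 := hpd x hxr
        have h2 := idx_lt_C (p := p) (ord := ord) (p x)
        nlinarith [idx_lt_C (p := p) (ord := ord) x]
      · rw [fg_inr_some _ _ _ hxr hs]
        obtain ⟨hv, -⟩ := psib_some _ _ hs
        have hvr : v ≠ r := sib_ne_root hpr hpd hv
        have hrk : rkτ v = rkτ x := by
          have h1 := hpd v hvr
          have h2 := hpd x hxr
          rw [hv.1] at h1
          omega
        have hidx : idx p ord v < idx p ord x := by
          apply Set.ncard_lt_ncard _ (Set.toFinite _)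
          constructor
          · rintro w ⟨hw1, hw2, hw3⟩
            exact ⟨hw1.trans hv.1, fun h => hw2 (by rw [hv.1]; exact h), hw3.trans hv.2.2⟩
          · intro hsub
            have := (hsub hv) |>.2.2
            omega
        simp only [rkg, hrk]
        omega

include hpr hpd in
lemma idx_psib_lt {x v : τ} (hs : psib p ord x = some v) :
    idx p ord v < idx p ord x := by
  obtain ⟨hv, -⟩ := psib_some _ _ hs
  apply Set.ncard_lt_ncard _ (Set.toFinite _)
  constructor
  · rintro w ⟨hw1, hw2, hw3⟩
    exact ⟨hw1.trans hv.1, fun h => hw2 (by rw [hv.1]; exact h), hw3.trans hv.2.2⟩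
  · intro hsub
    have := (hsub hv) |>.2.2
    omega

lemma desc_fg_inl_iff {t : τ} {z : τ ⊕ τ} :
    desc (fg p r ord) (Sum.inl t) z ↔ z = Sum.inl t := by
  constructor
  · rintro ⟨k, hk⟩
    cases k with
    | zero => exact hk
    | succ n =>
        rw [Function.iterate_succ_apply'] at hk
        obtain ⟨y, hy⟩ := fg_is_inr p r ord ((fg p r ord)^[n] z)
        rw [hy] at hk
        cases hk
  · rintro rfl
    exact ⟨0, rfl⟩

lemma desc_fg_inr_inl_iff {u z : τ} :
    desc (fg p r ord) (Sum.inr u) (Sum.inl z) ↔ desc (fg p r ord) (Sum.inr u) (Sum.inr z) := by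
  constructor
  · rintro ⟨k, hk⟩
    cases k with
    | zero => cases hk
    | succ n =>
        rw [Function.iterate_succ_apply, fg_inl] at hk
        exact ⟨n, hk⟩
  · rintro ⟨k, hk⟩
    exact ⟨k + 1, by rwa [Function.iterate_succ_apply, fg_inl]⟩

include hpr hpd in
lemma desc_fg_parent {x : τ} (hx : x ≠ r) :
    desc (fg p r ord) (Sum.inr (p x)) (Sum.inr x) := by
  have pd := pdata_fg (ord := ord) hpr hpd
  generalize hn : idx p ord x = n
  induction n using Nat.strong_induction_on generalizing x with
  | _ n ih =>
    rcases hs : psib p ord x with _ | v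
    · exact ⟨1, by rw [Function.iterate_one, fg_inr_none _ _ _ hx hs]⟩
    · obtain ⟨hv, -⟩ := psib_some _ _ hs
      have hvr : v ≠ r := sib_ne_root hpr hpd hv
      have hd : desc (fg p r ord) (Sum.inr (p v)) (Sum.inr v) :=
        ih (idx p ord v) (hn ▸ idx_psib_lt hpr hpd hs) hvr rfl
      rw [hv.1] at hd
      apply pd.desc_step
      rwa [fg_inr_some _ _ _ hx hs]

include hpr hpd in
lemma Du_closed {u z x : τ} (hz : z ∈ Du p r ord u) (hpx : p x = z) (hx : x ≠ r) :
    x ∈ Du p r ord u := by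
  have pd := pdata_fg (ord := ord) hpr hpd
  exact pd.desc_trans hz (hpx ▸ desc_fg_parent hpr hpd hx)

include hpr hpd in
lemma Du_root_not_mem {u : τ} (hu : u ≠ r) : r ∉ Du p r ord u := by
  rintro ⟨k, hk⟩
  rw [Function.iterate_fixed (fg_inr_root p r ord) k] at hk
  exact hu (Sum.inr.inj hk).symm

include hpr hpd in
lemma Du_parent {u z : τ} (hu : u ≠ r) (hz : z ∈ Du p r ord u) :
    p z ∈ Du p r ord u ∨ p z = p u := by
  obtain ⟨k, hk⟩ := hz
  induction k generalizing z with
  | zero => exact Or.inr (by rw [Sum.inr.inj hk])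
  | succ n ih =>
      rw [Function.iterate_succ_apply] at hk
      by_cases hzr : z = r
      · rw [hzr, fg_inr_root, Function.iterate_fixed (fg_inr_root p r ord) n] at hk
        exact absurd (Sum.inr.inj hk).symm hu
      · rcases hs : psib p ord z with _ | v
        · rw [fg_inr_none _ _ _ hzr hs] at hk
          exact Or.inl ⟨n, hk⟩
        · rw [fg_inr_some _ _ _ hzr hs] at hk
          have := ih hk
          obtain ⟨hv, -⟩ := psib_some _ _ hs
          rwa [hv.1] at this

include hpr hpd in
lemma Du_top_not_mem {u : τ} (hu : u ≠ r) : p u ∉ Du p r ord u := by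
  have pd := pdata_fg (ord := ord) hpr hpd (rkτ := rkτ)
  intro hd
  have h1 := pd.rk_le_of_desc hd
  have h2 := hpd u hu
  have h3 := idx_lt_C (p := p) (ord := ord) (p u)
  simp only [rkg] at h1
  nlinarith

include hpr hpd in
lemma Du_walk_cross {S : SimpleGraph τ} (hS : ∀ a b, S.Adj a b → p a = b ∨ p b = a)
    {z z' : τ} (W : S.Walk z z') (u : τ) (hu : u ≠ r)
    (hz : z ∈ Du p r ord u) (hz' : z' ∉ Du p r ord u) : p u ∈ W.support := by
  induction W with
  | nil => exact absurd hz hz'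
  | @cons a b c hadj W ih =>
      by_cases hb : b ∈ Du p r ord u
      · rw [SimpleGraph.Walk.support_cons]
        exact List.mem_cons_of_mem _ (ih hb hz')
      · rcases hS _ _ hadj with he | he
        · rcases Du_parent hpr hpd hu hz with hc | hc
          · rw [he] at hc
            exact absurd hc hb
          · have hbu : b = p u := he.symm.trans hc
            rw [SimpleGraph.Walk.support_cons]
            exact List.mem_cons_of_mem _ (by rw [← hbu]; exact W.start_mem_support)
        · have hbr : b ≠ r := by
            rintro rfl
            rw [hpr] at he
            rw [← he] at hz
            exact Du_root_not_mem hpr hpd hu hz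
          exact absurd (Du_closed hpr hpd hz he hbr) hb

section Uniq
variable (hordinj : Function.Injective ord)

include hpr hpd hordinj in
lemma psib_some_subsingleton {t : τ} :
    {z : τ | z ≠ r ∧ psib p ord z = some t}.Subsingleton := by
  rintro z ⟨hzr, hz⟩ z' ⟨hz'r, hz'⟩
  by_contra hne
  obtain ⟨ht, hmax⟩ := psib_some _ _ hz
  obtain ⟨ht', hmax'⟩ := psib_some _ _ hz'
  have hpp : p z = p z' := by rw [← ht.1, ← ht'.1]
  have hords : ord z ≠ ord z' := fun h => hne (hordinj h)
  rcases Nat.lt_or_ge (ord z) (ord z') with hlt | hge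
  · have hmem : z ∈ sibset p ord z' := by
      refine ⟨hpp, fun h => hzr (p_fix hpd (by rw [← hpp] at h; exact h.symm)), hlt⟩
    have := hmax' z hmem
    have := ht.2.2
    omega
  · have hlt : ord z' < ord z := by omega
    have hmem : z' ∈ sibset p ord z := by
      refine ⟨hpp.symm, fun h => hz'r (p_fix hpd (by rw [hpp] at h; exact h.symm)), hlt⟩
    have := hmax z' hmem
    have := ht'.2.2
    omega

include hpr hpd hordinj in
lemma psib_none_subsingleton {t : τ} :
    {z : τ | z ≠ r ∧ psib p ord z = none ∧ p z = t}.Subsingleton := by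
  rintro z ⟨hzr, hz, hpz⟩ z' ⟨hz'r, hz', hpz'⟩
  by_contra hne
  have hpp : p z = p z' := by rw [hpz, hpz']
  have hords : ord z ≠ ord z' := fun h => hne (hordinj h)
  rcases Nat.lt_or_ge (ord z) (ord z') with hlt | hge
  · have hmem : z ∈ sibset p ord z' := by
      refine ⟨hpp, fun h => hzr (p_fix hpd (by rw [← hpp] at h; exact h.symm)), hlt⟩
    rw [psib_none _ _ hz'] at hmem
    exact hmem
  · have hlt : ord z' < ord z := by omega
    have hmem : z' ∈ sibset p ord z := by
      refine ⟨hpp.symm, fun h => hz'r (p_fix hpd (by rw [hpp] at h; exact h.symm)), hlt⟩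
    rw [psib_none _ _ hz] at hmem
    exact hmem

include hpr hpd hordinj in
lemma preim_fg_ncard {t : τ} : {z : τ | z ≠ r ∧ fg p r ord (Sum.inr z) = Sum.inr t}.ncard ≤ 2 := by
  have hsub : {z : τ | z ≠ r ∧ fg p r ord (Sum.inr z) = Sum.inr t} ⊆
      {z : τ | z ≠ r ∧ psib p ord z = some t} ∪
      {z : τ | z ≠ r ∧ psib p ord z = none ∧ p z = t} := by
    rintro z ⟨hzr, hz⟩
    rcases hs : psib p ord z with _ | v
    · rw [fg_inr_none _ _ _ hzr hs] at hz
      exact Or.inr ⟨hzr, hs, Sum.inr.inj hz⟩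
    · rw [fg_inr_some _ _ _ hzr hs] at hz
      exact Or.inl ⟨hzr, (Sum.inr.inj hz) ▸ hs⟩
  calc _ ≤ _ := Set.ncard_le_ncard hsub (Set.toFinite _)
    _ ≤ _ + _ := Set.ncard_union_le _ _
    _ ≤ 2 := by
        have h1 := (psib_some_subsingleton hpr hpd hordinj (t := t)).eq_empty_or_singleton
        have h2 := (psib_none_subsingleton hpr hpd hordinj (t := t)).eq_empty_or_singleton
        rcases h1 with h1 | ⟨x, h1⟩ <;> rcases h2 with h2 | ⟨y, h2⟩ <;>
          simp [h1, h2]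

lemma nb_inl_eq (t : τ) :
    {y : τ ⊕ τ | (pgraph (fg p r ord)).Adj (Sum.inl t) y} = {Sum.inr t} := by
  ext y
  simp only [Set.mem_setOf_eq, Set.mem_singleton_iff]
  constructor
  · rintro ⟨hne, h | h⟩
    · exact h.symm
    · obtain ⟨z, hz⟩ := fg_is_inr p r ord y
      rw [hz] at h
      cases h
  · rintro rfl
    exact ⟨fun h => (by cases h), Or.inl rfl⟩

include hpr hpd hordinj in
lemma nb_inr_ncard (t : τ) :
    {y : τ ⊕ τ | (pgraph (fg p r ord)).Adj (Sum.inr t) y}.ncard ≤ 4 := by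
  have hsub : {y : τ ⊕ τ | (pgraph (fg p r ord)).Adj (Sum.inr t) y} ⊆
      insert (fg p r ord (Sum.inr t)) (insert (Sum.inl t)
        (Sum.inr '' {z : τ | z ≠ r ∧ fg p r ord (Sum.inr z) = Sum.inr t})) := by
    rintro y ⟨hne, h | h⟩
    · exact Set.mem_insert_iff.2 (Or.inl h.symm)
    · rcases y with z | z
      · have : z = t := by
          rw [fg_inl] at h
          exact Sum.inr.inj h
        subst this
        exact Set.mem_insert_iff.2 (Or.inr (Set.mem_insert _ _))
      · have hzr : z ≠ r := by
          rintro rfl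
          rw [fg_inr_root] at h
          exact hne (h.symm)
      
        exact Set.mem_insert_iff.2 (Or.inr (Set.mem_insert_iff.2
          (Or.inr ⟨z, ⟨hzr, h⟩, rfl⟩)))
  calc {y : τ ⊕ τ | (pgraph (fg p r ord)).Adj (Sum.inr t) y}.ncard
      ≤ _ := Set.ncard_le_ncard hsub (Set.toFinite _)
    _ ≤ _ + 1 := Set.ncard_insert_le _ _
    _ ≤ (_ + 1) + 1 := by gcongr; exact Set.ncard_insert_le _ _
    _ ≤ 4 := by
        have h1 : (Sum.inr '' {z : τ | z ≠ r ∧ fg p r ord (Sum.inr z) = Sum.inr t} :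
            Set (τ ⊕ τ)).ncard ≤ 2 :=
          (Set.ncard_image_le (Set.toFinite _)).trans (preim_fg_ncard hpr hpd hordinj)
        omega

end Uniq

end
end Gadget

section MGHelpers
open Multigraph

lemma natSSup_le {s : Set ℕ} {m : ℕ} (h : ∀ n ∈ s, n ≤ m) : sSup s ≤ m := by
  rcases Set.eq_empty_or_nonempty s with rfl | hne
  · rw [csSup_empty]
    exact Nat.zero_le m
  · exact csSup_le hne h

lemma edgeCut_compl (G : Multigraph) (U : Set G.V) : G.edgeCut Uᶜ = G.edgeCut U := by
  ext e
  constructor <;> rintro ⟨a, b, hab, ha, hb⟩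
  · exact ⟨b, a, hab.trans (Sym2.eq_swap), by simpa using hb, by simpa using ha⟩
  · exact ⟨b, a, hab.trans (Sym2.eq_swap), by simpa using hb, by simpa using ha⟩

lemma cut_card_le (G : Multigraph) {d : ℕ} (hdeg : ∀ v, G.degree v ≤ d)
    (U Y : Set G.V) (hY : ∀ e ∈ G.edgeCut U, ∃ z ∈ Y, z ∈ G.ends e) :
    (G.edgeCut U).ncard ≤ Y.ncard * d := by
  classical
  haveI : Fintype G.V := Fintype.ofFinite _
  haveI : Fintype G.E := Fintype.ofFinite _
  rw [Set.ncard_eq_toFinset_card', Set.ncard_eq_toFinset_card']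
  have hsub : (G.edgeCut U).toFinset ⊆
      Y.toFinset.biUnion (fun z => Finset.univ.filter (fun e => z ∈ G.ends e)) := by
    intro e he
    rw [Set.mem_toFinset] at he
    obtain ⟨z, hz, hze⟩ := hY e he
    exact Finset.mem_biUnion.2 ⟨z, Set.mem_toFinset.2 hz, by simp [hze]⟩
  calc (G.edgeCut U).toFinset.card ≤ _ := Finset.card_le_card hsub
    _ ≤ ∑ z ∈ Y.toFinset, (Finset.univ.filter (fun e => z ∈ G.ends e)).card :=
        Finset.card_biUnion_le
    _ ≤ Y.toFinset.card * d := by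
        rw [← smul_eq_mul]
        apply Finset.sum_le_card_nsmul
        intro z _
        have h1 : (Finset.univ.filter (fun e => z ∈ G.ends e)).card =
            Nat.card {e : G.E // z ∈ G.ends e} := by
          rw [Nat.card_eq_fintype_card, Fintype.card_subtype]
        rw [h1]
        exact hdeg z

lemma threeCenterCard_le (H : Multigraph) (X : Set H.V) :
    threeCenterCard H X ≤ Nat.card H.V := by
  apply natSSup_le
  rintro n ⟨C, hC, rfl⟩
  obtain ⟨I, -⟩ := hC.1
  exact Nat.card_le_card_of_injective I.vmap I.vmap_inj

lemma walk_down {α : Type} {T : SimpleGraph α} {P : Set α} {a b : ↥P}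
    (w : (SimpleGraph.induce P T).Walk a b) :
    ∃ W : T.Walk a.val b.val, ∀ n ∈ W.support, n ∈ P := by
  induction w with
  | nil =>
      refine ⟨SimpleGraph.Walk.nil, ?_⟩
      intro n hn
      rw [SimpleGraph.Walk.support_nil, List.mem_singleton] at hn
      subst hn
      exact Subtype.coe_prop _
  | @cons u v c h q ih =>
      obtain ⟨W, hW⟩ := ih
      refine ⟨SimpleGraph.Walk.cons (by exact h) W, ?_⟩
      intro n hn
      change n ∈ (u.val :: W.support) at hn
      rw [List.mem_cons] at hn
      rcases hn with rfl | hn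
      · exact Subtype.coe_prop _
      · exact hW n hn

lemma exists_bag_walk {G : Multigraph} (D : TreeDecomp G) (v : G.V) {s s' : D.T}
    (hs : v ∈ D.bag s) (hs' : v ∈ D.bag s') :
    ∃ W : D.tree.Walk s s', ∀ n ∈ W.support, v ∈ D.bag n := by
  obtain ⟨w⟩ := (D.connected v).preconnected ⟨s, hs⟩ ⟨s', hs'⟩
  exact walk_down w

lemma tdSet_nonempty (G : Multigraph) :
    {n | ∃ D : TreeDecomp G, ∀ t : D.T, (D.bag t).ncard ≤ n + 1}.Nonempty := by
  classical
  have hconn : (⊥ : SimpleGraph Unit).Connected := by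
    constructor
    intro a b
    exact Subsingleton.elim a b ▸ SimpleGraph.Reachable.refl a
  have hctree : (⊥ : SimpleGraph Unit).IsTree := ⟨hconn, SimpleGraph.isAcyclic_bot⟩
  have hcovers_e : ∀ e : G.E, ∃ (t : Unit) (x y : G.V),
      G.ends e = s(x, y) ∧ x ∈ (Set.univ : Set G.V) ∧ y ∈ (Set.univ : Set G.V) := by
    intro e
    obtain ⟨x, y, hxy⟩ := Sym2.ind (f := fun z => ∃ x y, z = s(x, y))
      (fun x y => ⟨x, y, rfl⟩) (G.ends e)
    exact ⟨(), x, y, hxy, trivial, trivial⟩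
  have hconn2 : ∀ v : G.V, (SimpleGraph.induce {t : Unit | v ∈ (Set.univ : Set G.V)}
      (⊥ : SimpleGraph Unit)).Connected := by
    intro v
    haveI : Nonempty ↥{t : Unit | v ∈ (Set.univ : Set G.V)} := ⟨⟨(), trivial⟩⟩
    constructor
    intro a b
    exact Subsingleton.elim a b ▸ SimpleGraph.Reachable.refl a
  refine ⟨Nat.card G.V,
    ⟨{ T := Unit
       finT := inferInstance
       tree := ⊥
       isTree := hctree
       bag := fun _ => Set.univ
       covers_v := fun v => ⟨(), trivial⟩
       covers_e := hcovers_e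
       connected := hconn2 }, fun t => ?_⟩⟩
  show (Set.univ : Set G.V).ncard ≤ Nat.card G.V + 1
  calc (Set.univ : Set G.V).ncard = Nat.card G.V := Set.ncard_univ _
    _ ≤ Nat.card G.V + 1 := Nat.le_succ _

end MGHelpers

section Main
open Multigraph

lemma main_construction (G : Multigraph) (d w : ℕ) (hd : 1 ≤ d) (hw : 1 ≤ w)
    (hdeg : ∀ v, G.degree v ≤ d) (D0 : TreeDecomp G)
    (hbag : ∀ t, (D0.bag t).ncard ≤ w + 1) :
    ∃ D : TreeCutDecomp G,
      D.adhesion ≤ (w + 1) * d ∧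
      (∀ z : D.T, Nat.card (D.torso z).V ≤ (d + 1) * (w + 1)) := by
  classical
  haveI : Finite D0.T := D0.finT
  obtain ⟨r⟩ : Nonempty D0.T := D0.isTree.isConnected.nonempty
  haveI : Nonempty (D0.T ⊕ D0.T) := ⟨Sum.inl r⟩
  obtain ⟨p, hpr, hpd, hadjS⟩ := exists_parent D0.tree D0.isTree r
  obtain ⟨n, ⟨eqf⟩⟩ := Finite.exists_equiv_fin D0.T
  set ord : D0.T → ℕ := fun t => (eqf t).val with hord
  have hordinj : Function.Injective ord := by
    intro a b h
    exact eqf.injective (Fin.val_injective h)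
  have pd := pdata_fg (ord := ord) (rkτ := fun t => D0.tree.dist t r) hpr hpd
  set asg : G.V → D0.T := fun v => (D0.covers_v v).choose with hasg
  have asg_mem : ∀ v, v ∈ D0.bag (asg v) := fun v => (D0.covers_v v).choose_spec
  have hSp : ∀ a b, D0.tree.Adj a b → p a = b ∨ p b = a := fun a b h => ((hadjS a b).1 h).2
  -- the key bound on cuts of descendant sets
  have hQbound : ∀ a : D0.T ⊕ D0.T, a ≠ Sum.inr r →
      (G.edgeCut {x | desc (fg p r ord) a (Sum.inl (asg x))}).ncard ≤ (w + 1) * d := by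
    intro a ha
    rcases a with t | u
    · have hset : {x | desc (fg p r ord) (Sum.inl t) (Sum.inl (asg x))} = {x | asg x = t} := by
        ext x
        simp only [Set.mem_setOf_eq, desc_fg_inl_iff, Sum.inl.injEq]
      rw [hset]
      have hcut := cut_card_le G hdeg {x | asg x = t} (D0.bag t) ?_
      · exact hcut.trans (Nat.mul_le_mul_right d (hbag t))
      · rintro e' ⟨x, y, hexy, hx, hy⟩
        refine ⟨x, ?_, ?_⟩
        · have h2 := asg_mem x
          rwa [(hx : asg x = t)] at h2
        · rw [hexy]
          exact Sym2.mem_mk_left x y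
    · have hur : u ≠ r := fun h => ha (by rw [h])
      have hset : {x | desc (fg p r ord) (Sum.inr u) (Sum.inl (asg x))} =
          {x | asg x ∈ Du p r ord u} := by
        ext x
        simp only [Set.mem_setOf_eq]
        exact desc_fg_inr_inl_iff
      rw [hset]
      have hcut := cut_card_le G hdeg {x | asg x ∈ Du p r ord u} (D0.bag (p u)) ?_
      · exact hcut.trans (Nat.mul_le_mul_right d (hbag (p u)))
      · rintro e' ⟨x, y, hexy, hx, hy⟩
        obtain ⟨sc, x', y', hends', hx', hy'⟩ := D0.covers_e e'
        have hxy_bag : x ∈ D0.bag sc ∧ y ∈ D0.bag sc := by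
          rw [hexy, Sym2.eq_iff] at hends'
          rcases hends' with ⟨rfl, rfl⟩ | ⟨rfl, rfl⟩
          · exact ⟨hx', hy'⟩
          · exact ⟨hy', hx'⟩
        by_cases hsc : sc ∈ Du p r ord u
        · obtain ⟨W, hW⟩ := exists_bag_walk D0 y hxy_bag.2 (asg_mem y)
          have hc := Du_walk_cross (rkτ := fun t => D0.tree.dist t r) hpr hpd hSp W u hur hsc hy
          exact ⟨y, hW _ hc, by rw [hexy]; exact Sym2.mem_mk_right x y⟩
        · obtain ⟨W, hW⟩ := exists_bag_walk D0 x (asg_mem x) hxy_bag.1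
          have hc := Du_walk_cross (rkτ := fun t => D0.tree.dist t r) hpr hpd hSp W u hur hx hsc
          exact ⟨x, hW _ hc, by rw [hexy]; exact Sym2.mem_mk_left x y⟩
  refine ⟨{ T := D0.T ⊕ D0.T
            finT := inferInstance
            tree := pgraph (fg p r ord)
            isTree := pd.isTree
            bag := fun z => Sum.elim (fun t => {v | asg v = t}) (fun _ => (∅ : Set G.V)) z
            disj := ?_
            covers := fun v => ⟨Sum.inl (asg v), rfl⟩ }, ?_, ?_⟩
  · rintro (s | s) (t | t) hne
    · simp only [Sum.elim_inl]
      rw [Set.disjoint_left]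
      rintro v hv hv'
      exact hne (by rw [← (hv : asg v = s), ← (hv' : asg v = t)])
    · exact Set.disjoint_empty _
    · exact Set.empty_disjoint _
    · exact Set.disjoint_empty _
  · -- adhesion bound
    apply natSSup_le
    rintro k ⟨u, v, huv, rfl⟩
    have huv' : (pgraph (fg p r ord)).Adj u v := huv
    obtain ⟨hne, hor⟩ := huv'
    have hside : ∀ x : G.V,
        (∃ s, (((pgraph (fg p r ord)).deleteEdges {s(u, v)}).Reachable v s ∧
          x ∈ Sum.elim (fun t => {v | asg v = t}) (fun _ => (∅ : Set G.V)) s)) ↔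
        ((pgraph (fg p r ord)).deleteEdges {s(u, v)}).Reachable v (Sum.inl (asg x)) := by
      intro x
      constructor
      · rintro ⟨s, hres, hxs⟩
        rcases s with t | t
        · rw [← (hxs : asg x = t)] at hres
          exact hres
        · exact absurd hxs (Set.notMem_empty x)
      · intro hre
        exact ⟨Sum.inl (asg x), hre, rfl⟩
    have hss : {x : G.V | ∃ s, (((pgraph (fg p r ord)).deleteEdges {s(u, v)}).Reachable v s ∧
          x ∈ Sum.elim (fun t => {v | asg v = t}) (fun _ => (∅ : Set G.V)) s)} =
        {x : G.V | ((pgraph (fg p r ord)).deleteEdges {s(u, v)}).Reachable v (Sum.inl (asg x))} := by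
      ext x
      exact hside x
    show (G.edgeCut {x : G.V | ∃ s,
        (((pgraph (fg p r ord)).deleteEdges {s(u, v)}).Reachable v s ∧
          x ∈ Sum.elim (fun t => {v | asg v = t}) (fun _ => (∅ : Set G.V)) s)}).ncard ≤ (w + 1) * d
    rw [hss]
    rcases hor with he | he
    · have hu : u ≠ Sum.inr r := by
        rintro rfl
        exact hne (by rw [← he, fg_inr_root])
      have hchar : {x : G.V | ((pgraph (fg p r ord)).deleteEdges {s(u, v)}).Reachable v
          (Sum.inl (asg x))} = {x : G.V | desc (fg p r ord) u (Sum.inl (asg x))}ᶜ := by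
        ext x
        rw [Set.mem_setOf_eq, Set.mem_compl_iff, Set.mem_setOf_eq]
        have hri := pd.reachable_del_iff hu (b := v) (c := Sum.inl (asg x))
        rw [he] at hri
        rw [hri]
        have hfalse : ¬ desc (fg p r ord) u v := by
          rw [← he]
          exact pd.not_desc_f_self hu
        constructor
        · intro hiff hdx
          exact hfalse (hiff.2 hdx)
        · intro hnd
          exact ⟨fun hdx => (hfalse hdx).elim, fun hdx => (hnd hdx).elim⟩
      rw [hchar, edgeCut_compl]
      exact hQbound u hu
    · have hv : v ≠ Sum.inr r := by
        rintro rfl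
        exact hne (by rw [← he, fg_inr_root])
      have hchar : {x : G.V | ((pgraph (fg p r ord)).deleteEdges {s(u, v)}).Reachable v
          (Sum.inl (asg x))} = {x : G.V | desc (fg p r ord) v (Sum.inl (asg x))} := by
        ext x
        rw [Set.mem_setOf_eq, Set.mem_setOf_eq]
        have hsw : s(u, v) = s(v, u) := Sym2.eq_swap
        rw [hsw]
        have hri := pd.reachable_del_iff hv (b := v) (c := Sum.inl (asg x))
        rw [he] at hri
        rw [hri]
        exact ⟨fun h => h.1 (pd.desc_refl v), fun h => ⟨fun _ => h, fun _ => pd.desc_refl v⟩⟩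
      rw [hchar]
      exact hQbound v hv
  · -- torso bounds
    rintro (t | t)
    · show Nat.card (↥{v : G.V | asg v = t} ⊕
        {u : D0.T ⊕ D0.T // (pgraph (fg p r ord)).Adj (Sum.inl t) u}) ≤ (d + 1) * (w + 1)
      rw [Nat.card_sum]
      have h1 : Nat.card ↥{v : G.V | asg v = t} ≤ w + 1 := by
        rw [Nat.card_coe_set_eq]
        refine (Set.ncard_le_ncard ?_ (Set.toFinite _)).trans (hbag t)
        rintro v (hv : asg v = t)
        have h2 := asg_mem v
        rwa [hv] at h2
      have h2 : Nat.card {u : D0.T ⊕ D0.T // (pgraph (fg p r ord)).Adj (Sum.inl t) u} = 1 := by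
        have h3 : Nat.card {u : D0.T ⊕ D0.T // (pgraph (fg p r ord)).Adj (Sum.inl t) u} =
            ({y : D0.T ⊕ D0.T | (pgraph (fg p r ord)).Adj (Sum.inl t) y}).ncard :=
          Nat.card_coe_set_eq _
        rw [h3, nb_inl_eq, Set.ncard_singleton]
      rw [h2]
      nlinarith
    · show Nat.card (↥(∅ : Set G.V) ⊕
        {u : D0.T ⊕ D0.T // (pgraph (fg p r ord)).Adj (Sum.inr t) u}) ≤ (d + 1) * (w + 1)
      rw [Nat.card_sum]
      have h1 : Nat.card ↥(∅ : Set G.V) = 0 := by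
        rw [Nat.card_coe_set_eq, Set.ncard_empty]
      have h2 : Nat.card {u : D0.T ⊕ D0.T // (pgraph (fg p r ord)).Adj (Sum.inr t) u} ≤ 4 := by
        have h3 : Nat.card {u : D0.T ⊕ D0.T // (pgraph (fg p r ord)).Adj (Sum.inr t) u} =
            ({y : D0.T ⊕ D0.T | (pgraph (fg p r ord)).Adj (Sum.inr t) y}).ncard :=
          Nat.card_coe_set_eq _
        rw [h3]
        exact nb_inr_ncard (rkτ := fun t => D0.tree.dist t r) hpr hpd hordinj t
      rw [h1]
      nlinarith

end Main

end TCWaux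

open Multigraph in
/-- bounded degree and bounded tree-width imply bounded tree-cut
width, with the stated explicit bounds. -/
theorem tcw_le_of_treewidth_and_degree (w d : ℕ) (hw : 1 ≤ w) (hd : 1 ≤ d)
    (G : Multigraph) (hdeg : ∀ v : G.V, G.degree v ≤ d) (htw : treewidth G ≤ w) :
    (∃ D : TreeCutDecomp G, D.adhesion ≤ (2 * w + 2) * d ∧
      ∀ t : D.T, Nat.card (D.torso t).V ≤ (d + 1) * (w + 1)) ∧
    tcw G ≤ (2 * w + 2) * d := by
  classical
  have hne := TCWaux.tdSet_nonempty G
  have hmem : treewidth G ∈ {n | ∃ D : TreeDecomp G, ∀ t : D.T, (D.bag t).ncard ≤ n + 1} :=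
    Nat.sInf_mem hne
  obtain ⟨D0, hD0⟩ := hmem
  have hbag : ∀ t, (D0.bag t).ncard ≤ w + 1 := fun t => (hD0 t).trans (by omega)
  obtain ⟨D, hadh, htorso⟩ := TCWaux.main_construction G d w hd hw hdeg D0 hbag
  have hadh2 : D.adhesion ≤ (2 * w + 2) * d := hadh.trans (Nat.mul_le_mul_right d (by omega))
  refine ⟨⟨D, hadh2, htorso⟩, ?_⟩
  have hwidth : D.width ≤ (2 * w + 2) * d := by
    rw [TreeCutDecomp.width]
    apply max_le hadh2
    apply TCWaux.natSSup_le
    rintro k ⟨t, rfl⟩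
    calc threeCenterCard (D.torso t) (D.torsoCore t)
        ≤ Nat.card (D.torso t).V := TCWaux.threeCenterCard_le _ _
      _ ≤ (d + 1) * (w + 1) := htorso t
      _ ≤ (2 * w + 2) * d := by nlinarith
  calc tcw G ≤ D.width := Nat.sInf_le ⟨D, rfl⟩
    _ ≤ _ := hwidth
end
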